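/- arXiv:2507.08909 — 8 statements merged into one kernel-verified Lean document; each statement's English description precedes it below -/
import Mathlib

section
/- Let J, K, H be finite-dimensional complex inner product spaces, let T : J → K be a surjective linear map and S : K → H a linear map. Then det((S ∘ T)* (S ∘ T)) = det(S* S) · det(T* T), where the adjoints and determinants are taken of the endomorphisms (S∘T)*(S∘T) of J, S*S of K, and T*T of J respectively. -/
lemma det_eq_zero_of_not_injective {𝕜 M : Type*} [Field 𝕜] [AddCommGroup M] [Module 𝕜 M]
    [FiniteDimensional 𝕜 M] (f : M →ₗ[𝕜] M) (h : ¬ Function.Injective f) :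
    LinearMap.det f = 0 := by
  by_contra hd
  apply h
  intro a b hab
  exact (f.equivOfDetNeZero hd).injective (by simpa [LinearEquiv.ofIsUnitDet_apply] using hab)

/-- Multiplicativity of the absolute determinant: for a surjective linear map `T : J → K`
and a linear map `S : K → H` between finite-dimensional complex inner product spaces,
`det ((S ∘ T)* (S ∘ T)) = det (S* S) · det (T* T)`. -/
theorem stmt_0 {J K H : Type*}
    [NormedAddCommGroup J] [InnerProductSpace ℂ J] [FiniteDimensional ℂ J]
    [NormedAddCommGroup K] [InnerProductSpace ℂ K] [FiniteDimensional ℂ K]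
    [NormedAddCommGroup H] [InnerProductSpace ℂ H] [FiniteDimensional ℂ H]
    (T : J →ₗ[ℂ] K) (S : K →ₗ[ℂ] H) (hT : Function.Surjective T) :
    LinearMap.det (LinearMap.adjoint (S ∘ₗ T) ∘ₗ (S ∘ₗ T)) =
      LinearMap.det (LinearMap.adjoint S ∘ₗ S) * LinearMap.det (LinearMap.adjoint T ∘ₗ T) := by
  by_cases hinj : Function.Injective T
  · -- T is bijective
    let e : J ≃ₗ[ℂ] K := LinearEquiv.ofBijective T ⟨hinj, hT⟩
    have he : (e : J →ₗ[ℂ] K) = T := rfl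
    have key : LinearMap.adjoint (S ∘ₗ T) ∘ₗ (S ∘ₗ T) =
        (LinearMap.adjoint T ∘ₗ T) ∘ₗ
          ((e.symm : K →ₗ[ℂ] J) ∘ₗ (LinearMap.adjoint S ∘ₗ S) ∘ₗ (e : J →ₗ[ℂ] K)) := by
      rw [LinearMap.adjoint_comp]
      ext x
      simp [he, LinearMap.comp_apply]
      congr 1
      exact (e.apply_symm_apply _).symm
    rw [key, LinearMap.det_comp, mul_comm]
    congr 1
    have := LinearMap.det_conj (LinearMap.adjoint S ∘ₗ S) e.symm
    simpa using this
  · -- T not injective: both sides vanish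
    obtain ⟨x, hx, hx0⟩ : ∃ x, T x = 0 ∧ x ≠ 0 := by
      rw [← LinearMap.ker_eq_bot] at hinj
      obtain ⟨x, hx, h0⟩ := Submodule.exists_mem_ne_zero_of_ne_bot hinj
      exact ⟨x, hx, h0⟩
    have h1 : LinearMap.det (LinearMap.adjoint (S ∘ₗ T) ∘ₗ (S ∘ₗ T)) = 0 := by
      apply det_eq_zero_of_not_injective
      intro hinj'
      apply hx0
      apply hinj'
      simp [LinearMap.comp_apply, hx]
    have h2 : LinearMap.det (LinearMap.adjoint T ∘ₗ T) = 0 := by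
      apply det_eq_zero_of_not_injective
      intro hinj'
      apply hx0
      apply hinj'
      simp [LinearMap.comp_apply, hx]
    rw [h1, h2, mul_zero]
end

section
/- Let H be a finite-dimensional complex inner product space, T : ℂ^k → H and S : ℂ^ℓ → H linear maps, and let [T,S] : ℂ^k ⊕ ℂ^ℓ → H be the combined map (x,y) ↦ Tx + Sy. Let P be the orthogonal projection of H onto the range of S and P⊥ = 1 − P. Then det([T,S]* [T,S]) = det(S* S) · det((P⊥ T)* (P⊥ T)). -/
/-- The combined map `[T,S] : ℂ^ι ⊕ ℂ^κ → H`, `(x, y) ↦ T x + S y`. -/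
noncomputable def combinedMap {ι κ H : Type*}
    [NormedAddCommGroup H] [InnerProductSpace ℂ H]
    (T : EuclideanSpace ℂ ι →ₗ[ℂ] H) (S : EuclideanSpace ℂ κ →ₗ[ℂ] H) :
    EuclideanSpace ℂ (ι ⊕ κ) →ₗ[ℂ] H :=
  T ∘ₗ (WithLp.linearEquiv 2 ℂ (ι → ℂ)).symm.toLinearMap ∘ₗ LinearMap.funLeft ℂ ℂ Sum.inl ∘ₗ
      (WithLp.linearEquiv 2 ℂ (ι ⊕ κ → ℂ)).toLinearMap +
    S ∘ₗ (WithLp.linearEquiv 2 ℂ (κ → ℂ)).symm.toLinearMap ∘ₗ LinearMap.funLeft ℂ ℂ Sum.inr ∘ₗ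
      (WithLp.linearEquiv 2 ℂ (ι ⊕ κ → ℂ)).toLinearMap

/-- `P⊥ = 1 - P`, where `P` is the orthogonal projection onto the submodule `M`. -/
noncomputable def perpProj {H : Type*} [NormedAddCommGroup H] [InnerProductSpace ℂ H]
    [FiniteDimensional ℂ H] (M : Submodule ℂ H) : H →ₗ[ℂ] H :=
  LinearMap.id - M.subtype ∘ₗ (M.orthogonalProjectionOnto).toLinearMap


noncomputable section Aux

open LinearMap

variable (k ℓ : ℕ)

def res1 : EuclideanSpace ℂ (Fin k ⊕ Fin ℓ) →ₗ[ℂ] EuclideanSpace ℂ (Fin k) :=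
  (WithLp.linearEquiv 2 ℂ (Fin k → ℂ)).symm.toLinearMap ∘ₗ LinearMap.funLeft ℂ ℂ Sum.inl ∘ₗ
      (WithLp.linearEquiv 2 ℂ (Fin k ⊕ Fin ℓ → ℂ)).toLinearMap

def res2 : EuclideanSpace ℂ (Fin k ⊕ Fin ℓ) →ₗ[ℂ] EuclideanSpace ℂ (Fin ℓ) :=
  (WithLp.linearEquiv 2 ℂ (Fin ℓ → ℂ)).symm.toLinearMap ∘ₗ LinearMap.funLeft ℂ ℂ Sum.inr ∘ₗ
      (WithLp.linearEquiv 2 ℂ (Fin k ⊕ Fin ℓ → ℂ)).toLinearMap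

def ext1 : EuclideanSpace ℂ (Fin k) →ₗ[ℂ] EuclideanSpace ℂ (Fin k ⊕ Fin ℓ) where
  toFun x := WithLp.toLp 2 (Sum.elim x.ofLp 0)
  map_add' x y := by ext i; cases i <;> simp
  map_smul' c x := by ext i; cases i <;> simp

def ext2 : EuclideanSpace ℂ (Fin ℓ) →ₗ[ℂ] EuclideanSpace ℂ (Fin k ⊕ Fin ℓ) where
  toFun x := WithLp.toLp 2 (Sum.elim 0 x.ofLp)
  map_add' x y := by ext i; cases i <;> simp
  map_smul' c x := by ext i; cases i <;> simp

variable {k ℓ}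

@[simp] lemma res1_apply (z : EuclideanSpace ℂ (Fin k ⊕ Fin ℓ)) (i : Fin k) :
    res1 k ℓ z i = z (Sum.inl i) := rfl
@[simp] lemma res2_apply (z : EuclideanSpace ℂ (Fin k ⊕ Fin ℓ)) (i : Fin ℓ) :
    res2 k ℓ z i = z (Sum.inr i) := rfl
@[simp] lemma ext1_apply_inl (x : EuclideanSpace ℂ (Fin k)) (i : Fin k) :
    ext1 k ℓ x (Sum.inl i) = x i := rfl
@[simp] lemma ext1_apply_inr (x : EuclideanSpace ℂ (Fin k)) (i : Fin ℓ) :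
    ext1 k ℓ x (Sum.inr i) = 0 := rfl
@[simp] lemma ext2_apply_inl (x : EuclideanSpace ℂ (Fin ℓ)) (i : Fin k) :
    ext2 k ℓ x (Sum.inl i) = 0 := rfl
@[simp] lemma ext2_apply_inr (x : EuclideanSpace ℂ (Fin ℓ)) (i : Fin ℓ) :
    ext2 k ℓ x (Sum.inr i) = x i := rfl

lemma adjoint_res1 : LinearMap.adjoint (res1 k ℓ) = ext1 k ℓ := by
  symm; rw [LinearMap.eq_adjoint_iff]; intro x y
  simp [PiLp.inner_apply, Fintype.sum_sum_type]

lemma adjoint_res2 : LinearMap.adjoint (res2 k ℓ) = ext2 k ℓ := by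
  symm; rw [LinearMap.eq_adjoint_iff]; intro x y
  simp [PiLp.inner_apply, Fintype.sum_sum_type]

def blockMap (A : EuclideanSpace ℂ (Fin k) →ₗ[ℂ] EuclideanSpace ℂ (Fin k))
    (B : EuclideanSpace ℂ (Fin ℓ) →ₗ[ℂ] EuclideanSpace ℂ (Fin k))
    (C : EuclideanSpace ℂ (Fin k) →ₗ[ℂ] EuclideanSpace ℂ (Fin ℓ))
    (D : EuclideanSpace ℂ (Fin ℓ) →ₗ[ℂ] EuclideanSpace ℂ (Fin ℓ)) :
    EuclideanSpace ℂ (Fin k ⊕ Fin ℓ) →ₗ[ℂ] EuclideanSpace ℂ (Fin k ⊕ Fin ℓ) :=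
  ext1 k ℓ ∘ₗ A ∘ₗ res1 k ℓ + ext1 k ℓ ∘ₗ B ∘ₗ res2 k ℓ +
    ext2 k ℓ ∘ₗ C ∘ₗ res1 k ℓ + ext2 k ℓ ∘ₗ D ∘ₗ res2 k ℓ

variable {A A' : EuclideanSpace ℂ (Fin k) →ₗ[ℂ] EuclideanSpace ℂ (Fin k)}
  {B B' : EuclideanSpace ℂ (Fin ℓ) →ₗ[ℂ] EuclideanSpace ℂ (Fin k)}
  {C C' : EuclideanSpace ℂ (Fin k) →ₗ[ℂ] EuclideanSpace ℂ (Fin ℓ)}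
  {D D' : EuclideanSpace ℂ (Fin ℓ) →ₗ[ℂ] EuclideanSpace ℂ (Fin ℓ)}

@[simp] lemma blockMap_apply_inl (z : EuclideanSpace ℂ (Fin k ⊕ Fin ℓ)) (i : Fin k) :
    blockMap A B C D z (Sum.inl i) = A (res1 k ℓ z) i + B (res2 k ℓ z) i := by
  simp [blockMap]

@[simp] lemma blockMap_apply_inr (z : EuclideanSpace ℂ (Fin k ⊕ Fin ℓ)) (i : Fin ℓ) :
    blockMap A B C D z (Sum.inr i) = C (res1 k ℓ z) i + D (res2 k ℓ z) i := by
  simp [blockMap]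

lemma res1_blockMap (z : EuclideanSpace ℂ (Fin k ⊕ Fin ℓ)) :
    res1 k ℓ (blockMap A B C D z) = A (res1 k ℓ z) + B (res2 k ℓ z) := by
  ext i; simp
lemma res2_blockMap (z : EuclideanSpace ℂ (Fin k ⊕ Fin ℓ)) :
    res2 k ℓ (blockMap A B C D z) = C (res1 k ℓ z) + D (res2 k ℓ z) := by
  ext i; simp

lemma blockMap_comp :
    blockMap A B C D ∘ₗ blockMap A' B' C' D' =
      blockMap (A ∘ₗ A' + B ∘ₗ C') (A ∘ₗ B' + B ∘ₗ D')
        (C ∘ₗ A' + D ∘ₗ C') (C ∘ₗ B' + D ∘ₗ D') := by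
  apply LinearMap.ext; intro z
  ext i
  cases i <;> simp [res1_blockMap, res2_blockMap, map_add] <;> ring

lemma adjoint_blockMap :
    LinearMap.adjoint (blockMap A B C D) =
      blockMap (LinearMap.adjoint A) (LinearMap.adjoint C)
        (LinearMap.adjoint B) (LinearMap.adjoint D) := by
  have he1 : LinearMap.adjoint (ext1 k ℓ) = res1 k ℓ := by
    rw [← adjoint_res1, LinearMap.adjoint_adjoint]
  have he2 : LinearMap.adjoint (ext2 k ℓ) = res2 k ℓ := by
    rw [← adjoint_res2, LinearMap.adjoint_adjoint]
  unfold blockMap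
  simp only [map_add, LinearMap.adjoint_comp, adjoint_res1, adjoint_res2, he1, he2,
    LinearMap.comp_assoc]
  abel

end Aux

section Matrices

noncomputable def bE (n : ℕ) : Module.Basis (Fin n) ℂ (EuclideanSpace ℂ (Fin n)) :=
  (EuclideanSpace.basisFun (Fin n) ℂ).toBasis

noncomputable def bS (k ℓ : ℕ) : Module.Basis (Fin k ⊕ Fin ℓ) ℂ (EuclideanSpace ℂ (Fin k ⊕ Fin ℓ)) :=
  (EuclideanSpace.basisFun (Fin k ⊕ Fin ℓ) ℂ).toBasis

lemma res1_single_inl (j : Fin k) :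
    res1 k ℓ (EuclideanSpace.single (Sum.inl j : Fin k ⊕ Fin ℓ) (1:ℂ)) =
      EuclideanSpace.single j 1 := by
  ext i; simp [EuclideanSpace.single_apply]

lemma res2_single_inl (j : Fin k) :
    res2 k ℓ (EuclideanSpace.single (Sum.inl j : Fin k ⊕ Fin ℓ) (1:ℂ)) = 0 := by
  ext i; simp [EuclideanSpace.single_apply]

lemma res1_single_inr (j : Fin ℓ) :
    res1 k ℓ (EuclideanSpace.single (Sum.inr j : Fin k ⊕ Fin ℓ) (1:ℂ)) = 0 := by
  ext i; simp [EuclideanSpace.single_apply]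

lemma res2_single_inr (j : Fin ℓ) :
    res2 k ℓ (EuclideanSpace.single (Sum.inr j : Fin k ⊕ Fin ℓ) (1:ℂ)) =
      EuclideanSpace.single j 1 := by
  ext i; simp [EuclideanSpace.single_apply]

lemma toMatrix_blockMap :
    LinearMap.toMatrix (bS k ℓ) (bS k ℓ) (blockMap A B C D) =
      Matrix.fromBlocks (LinearMap.toMatrix (bE k) (bE k) A)
        (LinearMap.toMatrix (bE ℓ) (bE k) B)
        (LinearMap.toMatrix (bE k) (bE ℓ) C)
        (LinearMap.toMatrix (bE ℓ) (bE ℓ) D) := by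
  ext i j
  cases i <;> cases j <;>
    simp [LinearMap.toMatrix_apply, bS, bE, OrthonormalBasis.coe_toBasis_repr_apply,
      OrthonormalBasis.coe_toBasis, EuclideanSpace.basisFun_apply, EuclideanSpace.basisFun_repr,
      res1_single_inl, res2_single_inl, res1_single_inr, res2_single_inr]

lemma det_blockMap_upper (A : EuclideanSpace ℂ (Fin k) →ₗ[ℂ] EuclideanSpace ℂ (Fin k))
    (B : EuclideanSpace ℂ (Fin ℓ) →ₗ[ℂ] EuclideanSpace ℂ (Fin k))
    (D : EuclideanSpace ℂ (Fin ℓ) →ₗ[ℂ] EuclideanSpace ℂ (Fin ℓ)) :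
    LinearMap.det (blockMap A B 0 D) = LinearMap.det A * LinearMap.det D := by
  rw [← LinearMap.det_toMatrix (bS k ℓ), toMatrix_blockMap, map_zero,
    Matrix.det_fromBlocks_zero₂₁, LinearMap.det_toMatrix, LinearMap.det_toMatrix]

lemma det_blockMap_lower (A : EuclideanSpace ℂ (Fin k) →ₗ[ℂ] EuclideanSpace ℂ (Fin k))
    (C : EuclideanSpace ℂ (Fin k) →ₗ[ℂ] EuclideanSpace ℂ (Fin ℓ))
    (D : EuclideanSpace ℂ (Fin ℓ) →ₗ[ℂ] EuclideanSpace ℂ (Fin ℓ)) :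
    LinearMap.det (blockMap A 0 C D) = LinearMap.det A * LinearMap.det D := by
  rw [← LinearMap.det_toMatrix (bS k ℓ), toMatrix_blockMap, map_zero,
    Matrix.det_fromBlocks_zero₁₂, LinearMap.det_toMatrix, LinearMap.det_toMatrix]

end Matrices

section PerpLemmas

variable {H : Type*} [NormedAddCommGroup H] [InnerProductSpace ℂ H] [FiniteDimensional ℂ H]

lemma adjoint_id' : LinearMap.adjoint (LinearMap.id : H →ₗ[ℂ] H) = LinearMap.id := by
  symm; rw [LinearMap.eq_adjoint_iff]; intro x y; rfl

lemma perpProj_adjoint (M : Submodule ℂ H) :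
    LinearMap.adjoint (perpProj M) = perpProj M := by
  have h : LinearMap.adjoint (M.subtype ∘ₗ (M.orthogonalProjectionOnto).toLinearMap) =
      M.subtype ∘ₗ (M.orthogonalProjectionOnto).toLinearMap := by
    symm
    rw [LinearMap.eq_adjoint_iff]
    intro x y
    exact M.inner_starProjection_left_eq_right x y
  have h2 : perpProj M = LinearMap.id - M.subtype ∘ₗ (M.orthogonalProjectionOnto).toLinearMap := rfl
  rw [h2, map_sub, h, adjoint_id']

lemma perpProj_comp_eq_zero {n : ℕ} (S : EuclideanSpace ℂ (Fin n) →ₗ[ℂ] H) :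
    perpProj (LinearMap.range S) ∘ₗ S = 0 := by
  apply LinearMap.ext; intro x
  have hx : S x ∈ LinearMap.range S := LinearMap.mem_range_self S x
  simp [perpProj, Submodule.orthogonalProjectionOnto_mem_subspace_eq_self ⟨S x, hx⟩]

end PerpLemmas

set_option maxHeartbeats 1000000

/-- Chain rule for log-determinant entropy:
`det ([T,S]* [T,S]) = det (S* S) · det ((P⊥ T)* (P⊥ T))`, where `P` is the orthogonal
projection of `H` onto the range of `S`. -/
theorem stmt_1 {k ℓ : ℕ} {H : Type*}
    [NormedAddCommGroup H] [InnerProductSpace ℂ H] [FiniteDimensional ℂ H]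
    (T : EuclideanSpace ℂ (Fin k) →ₗ[ℂ] H) (S : EuclideanSpace ℂ (Fin ℓ) →ₗ[ℂ] H) :
    LinearMap.det (LinearMap.adjoint (combinedMap T S) ∘ₗ combinedMap T S) =
      LinearMap.det (LinearMap.adjoint S ∘ₗ S) *
        LinearMap.det (LinearMap.adjoint (perpProj (LinearMap.range S) ∘ₗ T) ∘ₗ
          (perpProj (LinearMap.range S) ∘ₗ T)) := by
  set M : Submodule ℂ H := LinearMap.range S with hM
  obtain ⟨σ, hσ⟩ := S.rangeRestrict.exists_rightInverse_of_surjective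
    (LinearMap.range_rangeRestrict S)
  let proj : H →ₗ[ℂ] M := (M.orthogonalProjectionOnto).toLinearMap
  set Q : EuclideanSpace ℂ (Fin k) →ₗ[ℂ] H := perpProj M ∘ₗ T with hQ
  set R : EuclideanSpace ℂ (Fin k) →ₗ[ℂ] EuclideanSpace ℂ (Fin ℓ) :=
    σ ∘ₗ (proj ∘ₗ T) with hR
  have hσ' : ∀ v : M, S (σ v) = (v : H) := by
    intro v
    have h := LinearMap.congr_fun hσ v
    exact congrArg (Submodule.subtype M) h
  have hSR : S ∘ₗ R = M.subtype ∘ₗ (proj ∘ₗ T) := by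
    apply LinearMap.ext; intro x
    exact hσ' (proj (T x))
  have hT : T = Q + S ∘ₗ R := by
    rw [hQ, hSR]
    apply LinearMap.ext; intro x
    show T x = (T x - M.subtype (proj (T x))) + M.subtype (proj (T x))
    abel
  have hperpS : perpProj M ∘ₗ S = 0 := perpProj_comp_eq_zero S
  have hQS : LinearMap.adjoint Q ∘ₗ S = 0 := by
    rw [hQ, LinearMap.adjoint_comp, perpProj_adjoint, LinearMap.comp_assoc, hperpS,
      LinearMap.comp_zero]
  have hSQ : LinearMap.adjoint S ∘ₗ Q = 0 := by
    have := congrArg LinearMap.adjoint hQS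
    rwa [LinearMap.adjoint_comp (LinearMap.adjoint Q) S, LinearMap.adjoint_adjoint,
      map_zero] at this
  have hTadj : LinearMap.adjoint T =
      LinearMap.adjoint Q + LinearMap.adjoint R ∘ₗ LinearMap.adjoint S := by
    have := congrArg LinearMap.adjoint hT
    rwa [map_add, LinearMap.adjoint_comp S R] at this
  have e1 : LinearMap.adjoint Q ∘ₗ (S ∘ₗ R) = 0 := by
    rw [← LinearMap.comp_assoc, hQS, LinearMap.zero_comp]
  have e2 : (LinearMap.adjoint R ∘ₗ LinearMap.adjoint S) ∘ₗ Q = 0 := by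
    rw [LinearMap.comp_assoc, hSQ, LinearMap.comp_zero]
  have e3 : (LinearMap.adjoint R ∘ₗ LinearMap.adjoint S) ∘ₗ (S ∘ₗ R) =
      LinearMap.adjoint R ∘ₗ ((LinearMap.adjoint S ∘ₗ S) ∘ₗ R) := by
    simp only [LinearMap.comp_assoc]
  have hTT : LinearMap.adjoint T ∘ₗ T =
      LinearMap.adjoint Q ∘ₗ Q +
        LinearMap.adjoint R ∘ₗ ((LinearMap.adjoint S ∘ₗ S) ∘ₗ R) := by
    conv_lhs => rw [hTadj, hT]
    rw [LinearMap.add_comp, LinearMap.comp_add, LinearMap.comp_add, e1, e2, e3,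
      add_zero, zero_add]
  have hTS : LinearMap.adjoint T ∘ₗ S = LinearMap.adjoint R ∘ₗ (LinearMap.adjoint S ∘ₗ S) := by
    rw [hTadj, LinearMap.add_comp, hQS, zero_add, LinearMap.comp_assoc]
  have hST : LinearMap.adjoint S ∘ₗ T = (LinearMap.adjoint S ∘ₗ S) ∘ₗ R := by
    conv_lhs => rw [hT]
    rw [LinearMap.comp_add, hSQ, zero_add, LinearMap.comp_assoc]
  -- Gram of the combined map as a block map
  have hC : combinedMap T S = T ∘ₗ res1 k ℓ + S ∘ₗ res2 k ℓ := rfl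
  have step1 : LinearMap.adjoint (combinedMap T S) ∘ₗ combinedMap T S =
      blockMap (LinearMap.adjoint T ∘ₗ T) (LinearMap.adjoint T ∘ₗ S)
        (LinearMap.adjoint S ∘ₗ T) (LinearMap.adjoint S ∘ₗ S) := by
    rw [hC]
    unfold blockMap
    rw [map_add, LinearMap.adjoint_comp T (res1 k ℓ), LinearMap.adjoint_comp S (res2 k ℓ),
      adjoint_res1, adjoint_res2]
    simp only [LinearMap.add_comp, LinearMap.comp_add, LinearMap.comp_assoc]
    abel
  have hGram : LinearMap.adjoint (combinedMap T S) ∘ₗ combinedMap T S =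
      blockMap (LinearMap.adjoint Q ∘ₗ Q +
          LinearMap.adjoint R ∘ₗ ((LinearMap.adjoint S ∘ₗ S) ∘ₗ R))
        (LinearMap.adjoint R ∘ₗ (LinearMap.adjoint S ∘ₗ S))
        ((LinearMap.adjoint S ∘ₗ S) ∘ₗ R) (LinearMap.adjoint S ∘ₗ S) := by
    rw [step1, hTT, hTS, hST]
  have hfact : blockMap (LinearMap.adjoint Q ∘ₗ Q +
          LinearMap.adjoint R ∘ₗ ((LinearMap.adjoint S ∘ₗ S) ∘ₗ R))
        (LinearMap.adjoint R ∘ₗ (LinearMap.adjoint S ∘ₗ S))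
        ((LinearMap.adjoint S ∘ₗ S) ∘ₗ R) (LinearMap.adjoint S ∘ₗ S) =
      blockMap LinearMap.id (LinearMap.adjoint R) 0 LinearMap.id ∘ₗ
        (blockMap (LinearMap.adjoint Q ∘ₗ Q) 0 0 (LinearMap.adjoint S ∘ₗ S) ∘ₗ
          blockMap LinearMap.id 0 R LinearMap.id) := by
    rw [blockMap_comp, blockMap_comp]
    simp only [LinearMap.comp_zero, LinearMap.zero_comp, LinearMap.id_comp, LinearMap.comp_id,
      add_zero, zero_add]
  have hdet := congrArg LinearMap.det hGram
  rw [hfact, LinearMap.det_comp, LinearMap.det_comp, det_blockMap_upper, det_blockMap_lower,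
    det_blockMap_lower, LinearMap.det_id] at hdet
  rw [hdet, hQ]
  simp only [LinearMap.det_id, one_pow, one_mul, mul_one]
  ring
end

section
/- Let Q be an n×n complex positive semidefinite matrix and let α, β ⊆ {1,…,n}. Then det(Q[α ∪ β]) · det(Q[α ∩ β]) ≤ det(Q[α]) · det(Q[β]), where Q[γ] denotes the principal submatrix of Q with rows and columns indexed by γ, and det of the empty matrix is 1. -/
open scoped ComplexOrder
open Matrix

namespace Kot

variable {m l o : Type*} [Fintype m] [DecidableEq m] [Fintype l] [DecidableEq l]
  [Fintype o] [DecidableEq o]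

/-- det (1 + K) ≥ 1 for PSD K. -/
lemma one_le_det_one_add {K : Matrix m m ℂ} (hK : K.PosSemidef) : 1 ≤ (1 + K).det := by
  have hH := hK.1
  set U := (hH.eigenvectorUnitary : Matrix m m ℂ) with hU
  have hUU : U * star U = 1 := Matrix.mem_unitaryGroup_iff.mp hH.eigenvectorUnitary.2
  have hs : K = U * Matrix.diagonal (RCLike.ofReal ∘ hH.eigenvalues) * star U :=
    hH.spectral_theorem
  have h1 : 1 + K = U * (1 + Matrix.diagonal (RCLike.ofReal ∘ hH.eigenvalues)) * star U := by
    rw [Matrix.mul_add, Matrix.add_mul, Matrix.mul_one, hUU, ← hs]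
  have hUd : U.det * (star U).det = 1 := by rw [← Matrix.det_mul, hUU, Matrix.det_one]
  rw [h1, Matrix.det_mul, Matrix.det_mul, mul_right_comm, hUd, one_mul]
  rw [← Matrix.diagonal_one, Matrix.diagonal_add, Matrix.det_diagonal]
  have : ∀ i : m, (1 : ℂ) + (RCLike.ofReal ∘ hH.eigenvalues) i
      = ((1 + hH.eigenvalues i : ℝ) : ℂ) := by intro i; push_cast; rfl
  simp_rw [this]
  rw [← Complex.ofReal_prod]
  have : (1:ℝ) ≤ ∏ i : m, (1 + hH.eigenvalues i) := by
    calc (1:ℝ) = ∏ _i : m, 1 := by simp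
      _ ≤ ∏ i : m, (1 + hH.eigenvalues i) :=
        Finset.prod_le_prod (fun i _ => by norm_num)
          (fun i _ => by linarith [hK.eigenvalues_nonneg i])
  exact_mod_cast this

/-- A PSD matrix with nonzero determinant is PD. -/
lemma posDef_of_det_ne_zero {K : Matrix m m ℂ} (hK : K.PosSemidef) (hd : K.det ≠ 0) :
    K.PosDef := by
  exact hK.posDef_iff_det_ne_zero.mpr hd

open scoped MatrixOrder in
/-- Monotonicity of determinant: det M ≤ det (M + P) for M PD, P PSD. -/
lemma det_le_det_add {M P : Matrix m m ℂ} (hM : M.PosDef) (hP : P.PosSemidef) :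
    M.det ≤ (M + P).det := by
  set L := CFC.sqrt M with hLdef
  have hL : L.PosSemidef := Matrix.nonneg_iff_posSemidef.mp (CFC.sqrt_nonneg M)
  have hLL : L * L = M := CFC.sqrt_mul_sqrt_self M (Matrix.nonneg_iff_posSemidef.mpr hM.posSemidef)
  have hdL : L.det ≠ 0 := by
    intro h
    have := hM.det_pos
    rw [← hLL, Matrix.det_mul, h, mul_zero] at this
    exact lt_irrefl _ this
  have hLunit : IsUnit L := (Matrix.isUnit_iff_isUnit_det L).mpr hdL.isUnit
  have hLi : L * L⁻¹ = 1 := Matrix.mul_nonsing_inv _ hdL.isUnit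
  have hiL : L⁻¹ * L = 1 := Matrix.nonsing_inv_mul _ hdL.isUnit
  set K := L⁻¹ * P * L⁻¹ with hKdef
  have hKpsd : K.PosSemidef := by
    have : (L⁻¹)ᴴ = L⁻¹ := by rw [Matrix.conjTranspose_nonsing_inv, hL.1]
    have h2 := hP.conjTranspose_mul_mul_same (L⁻¹)
    rwa [this] at h2
  have hfact : M + P = L * (1 + K) * L := by
    rw [Matrix.mul_add, Matrix.add_mul, Matrix.mul_one, hLL, hKdef]
    congr 1
    refine (?_ : L * (L⁻¹ * P * L⁻¹) * L = P).symm
    calc L * (L⁻¹ * P * L⁻¹) * L = (L * L⁻¹) * P * (L⁻¹ * L) := by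
          simp only [Matrix.mul_assoc]
      _ = P := by rw [hLi, hiL, one_mul, mul_one]
  rw [hfact, Matrix.det_mul, Matrix.det_mul]
  have hdetM : L.det * L.det = M.det := by rw [← Matrix.det_mul, hLL]
  calc M.det = M.det * 1 := (mul_one _).symm
    _ ≤ M.det * (1 + K).det := by
        refine mul_le_mul_of_nonneg_left (one_le_det_one_add hKpsd) hM.det_pos.le
    _ = L.det * (1 + K).det * L.det := by rw [← hdetM]; ring

/-- A principal submatrix (along an injective map) of a PD matrix is PD. -/
lemma posDef_submatrix {n' : Type*} [Fintype n'] [DecidableEq n'] {M : Matrix n' n' ℂ}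
    (hM : M.PosDef) {f : m → n'} (hf : Function.Injective f) :
    (M.submatrix f f).PosDef := by
  exact hM.submatrix hf

/-- Fischer's inequality for a PD matrix given in block form. -/
lemma fischer (M : Matrix (l ⊕ o) (l ⊕ o) ℂ) (hM : M.PosDef) :
    M.det ≤ (M.toBlocks₁₁).det * (M.toBlocks₂₂).det := by
  set A := M.toBlocks₁₁ with hA
  set B := M.toBlocks₁₂ with hB
  set D := M.toBlocks₂₂ with hD
  have hC : M.toBlocks₂₁ = Bᴴ := by
    ext i j
    exact (hM.1.apply (Sum.inr i) (Sum.inl j)).symm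
  have hDpd : D.PosDef := posDef_submatrix hM Sum.inr_injective
  have hApd : A.PosDef := posDef_submatrix hM Sum.inl_injective
  haveI : Invertible D := D.invertibleOfIsUnitDet hDpd.det_pos.ne'.isUnit
  have hMb : M = Matrix.fromBlocks A B Bᴴ D := by
    rw [← hC, hA, hB, hD, Matrix.fromBlocks_toBlocks]
  set S := A - B * D⁻¹ * Bᴴ with hS
  have hdetM : M.det = D.det * S.det := by
    rw [hMb, Matrix.det_fromBlocks₂₂, Matrix.invOf_eq_nonsing_inv]
  have hSpsd : S.PosSemidef := by
    rw [hS, ← Matrix.PosDef.fromBlocks₂₂ A B hDpd, ← hMb]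
    exact hM.posSemidef
  have hSd : S.det ≠ 0 := by
    intro h
    have := hM.det_pos
    rw [hdetM, h, mul_zero] at this
    exact lt_irrefl _ this
  have hSpd : S.PosDef := posDef_of_det_ne_zero hSpsd hSd
  have hX : (B * D⁻¹ * Bᴴ).PosSemidef := hDpd.inv.posSemidef.mul_mul_conjTranspose_same B
  have hSA : S.det ≤ A.det := by
    have := det_le_det_add hSpd hX
    rwa [hS, sub_add_cancel] at this
  calc M.det = D.det * S.det := hdetM
    _ ≤ D.det * A.det := mul_le_mul_of_nonneg_left hSA hDpd.det_pos.le
    _ = A.det * D.det := mul_comm _ _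

/-- Core Koteljanskiĭ inequality, stated for a PD matrix over a sum type
`m ⊕ (l ⊕ o)` where `m` plays the role of `α ∩ β`, `l` of `α \ β`, `o` of `β \ α`. -/
lemma core (M : Matrix (m ⊕ (l ⊕ o)) (m ⊕ (l ⊕ o)) ℂ) (hM : M.PosDef) :
    M.det * (M.submatrix Sum.inl Sum.inl).det ≤
      (M.submatrix (Sum.map id Sum.inl : m ⊕ l → m ⊕ (l ⊕ o))
          (Sum.map id Sum.inl)).det *
        (M.submatrix (Sum.map id Sum.inr : m ⊕ o → m ⊕ (l ⊕ o))
          (Sum.map id Sum.inr)).det := by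
  set C := M.toBlocks₁₁ with hCdef
  set B := M.toBlocks₁₂ with hBdef
  set P := M.toBlocks₂₂ with hPdef
  have hBH : M.toBlocks₂₁ = Bᴴ := by
    ext i j
    exact (hM.1.apply (Sum.inr i) (Sum.inl j)).symm
  have hCpd : C.PosDef := posDef_submatrix hM Sum.inl_injective
  haveI : Invertible C := C.invertibleOfIsUnitDet hCpd.det_pos.ne'.isUnit
  have hMb : M = Matrix.fromBlocks C B Bᴴ P := by
    rw [← hBH, hCdef, hBdef, hPdef, Matrix.fromBlocks_toBlocks]
  set N := P - Bᴴ * C⁻¹ * B with hNdef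
  have hNpsd : N.PosSemidef := by
    rw [hNdef, ← Matrix.PosDef.fromBlocks₁₁ B P hCpd, ← hMb]
    exact hM.posSemidef
  have hdetM : M.det = C.det * N.det := by
    rw [hMb, Matrix.det_fromBlocks₁₁, Matrix.invOf_eq_nonsing_inv]
  have hNd : N.det ≠ 0 := by
    intro h
    have := hM.det_pos
    rw [hdetM, h, mul_zero] at this
    exact lt_irrefl _ this
  have hNpd : N.PosDef := posDef_of_det_ne_zero hNpsd hNd
  -- the A-side submatrix
  set MA := M.submatrix (Sum.map id Sum.inl : m ⊕ l → m ⊕ (l ⊕ o)) (Sum.map id Sum.inl) with hMA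
  set MB := M.submatrix (Sum.map id Sum.inr : m ⊕ o → m ⊕ (l ⊕ o)) (Sum.map id Sum.inr) with hMB
  have hMAb : MA = Matrix.fromBlocks C (B.submatrix id Sum.inl)
      ((B.submatrix id Sum.inl)ᴴ) (P.submatrix Sum.inl Sum.inl) := by
    ext i j
    cases i with
    | inl i => cases j with
      | inl j => rfl
      | inr j => rfl
    | inr i => cases j with
      | inl j =>
        show M (Sum.inr (Sum.inl i)) (Sum.inl j) = star (B j (Sum.inl i))
        have := congrFun (congrFun hBH (Sum.inl i)) j
        exact this
      | inr j => rfl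
  have hMBb : MB = Matrix.fromBlocks C (B.submatrix id Sum.inr)
      ((B.submatrix id Sum.inr)ᴴ) (P.submatrix Sum.inr Sum.inr) := by
    ext i j
    cases i with
    | inl i => cases j with
      | inl j => rfl
      | inr j => rfl
    | inr i => cases j with
      | inl j =>
        show M (Sum.inr (Sum.inr i)) (Sum.inl j) = star (B j (Sum.inr i))
        exact congrFun (congrFun hBH (Sum.inr i)) j
      | inr j => rfl
  have hmulA : (Bᴴ * C⁻¹ * B).submatrix Sum.inl Sum.inl
      = (B.submatrix id Sum.inl)ᴴ * C⁻¹ * (B.submatrix id Sum.inl) := by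
    ext i j
    simp [Matrix.mul_apply, Matrix.submatrix_apply, Matrix.conjTranspose_apply]
  have hmulB : (Bᴴ * C⁻¹ * B).submatrix Sum.inr Sum.inr
      = (B.submatrix id Sum.inr)ᴴ * C⁻¹ * (B.submatrix id Sum.inr) := by
    ext i j
    simp [Matrix.mul_apply, Matrix.submatrix_apply, Matrix.conjTranspose_apply]
  have hNA : P.submatrix Sum.inl Sum.inl
      - (B.submatrix id Sum.inl)ᴴ * C⁻¹ * (B.submatrix id Sum.inl)
      = N.submatrix Sum.inl Sum.inl := by
    rw [hNdef]
    ext i j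
    simp only [Matrix.sub_apply, Matrix.submatrix_apply]
    congr 1
  have hNB : P.submatrix Sum.inr Sum.inr
      - (B.submatrix id Sum.inr)ᴴ * C⁻¹ * (B.submatrix id Sum.inr)
      = N.submatrix Sum.inr Sum.inr := by
    rw [hNdef]
    ext i j
    simp only [Matrix.sub_apply, Matrix.submatrix_apply]
    congr 1
  have hdetMA : MA.det = C.det * (N.submatrix Sum.inl Sum.inl).det := by
    rw [hMAb, Matrix.det_fromBlocks₁₁, Matrix.invOf_eq_nonsing_inv, hNA]
  have hdetMB : MB.det = C.det * (N.submatrix Sum.inr Sum.inr).det := by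
    rw [hMBb, Matrix.det_fromBlocks₁₁, Matrix.invOf_eq_nonsing_inv, hNB]
  have hfis : N.det ≤ (N.submatrix Sum.inl Sum.inl).det * (N.submatrix Sum.inr Sum.inr).det :=
    fischer N hNpd
  have hCC : (0:ℂ) ≤ C.det * C.det := mul_nonneg hCpd.det_pos.le hCpd.det_pos.le
  have hsub : M.submatrix Sum.inl Sum.inl = C := rfl
  rw [hsub, hdetM, hdetMA, hdetMB]
  calc C.det * N.det * C.det = C.det * C.det * N.det := by ring
    _ ≤ C.det * C.det * ((N.submatrix Sum.inl Sum.inl).det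
        * (N.submatrix Sum.inr Sum.inr).det) := mul_le_mul_of_nonneg_left hfis hCC
    _ = C.det * (N.submatrix Sum.inl Sum.inl).det
        * (C.det * (N.submatrix Sum.inr Sum.inr).det) := by ring

/-- Koteljanskiĭ's inequality for positive definite matrices. -/
lemma kot_posDef {n : ℕ} (Q : Matrix (Fin n) (Fin n) ℂ) (hQ : Q.PosDef)
    (α β : Finset (Fin n)) :
    (Q.submatrix (Subtype.val : {i // i ∈ α ∪ β} → Fin n)
          (Subtype.val : {i // i ∈ α ∪ β} → Fin n)).det *
        (Q.submatrix (Subtype.val : {i // i ∈ α ∩ β} → Fin n)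
          (Subtype.val : {i // i ∈ α ∩ β} → Fin n)).det ≤
      (Q.submatrix (Subtype.val : {i // i ∈ α} → Fin n)
          (Subtype.val : {i // i ∈ α} → Fin n)).det *
        (Q.submatrix (Subtype.val : {i // i ∈ β} → Fin n)
          (Subtype.val : {i // i ∈ β} → Fin n)).det := by
  classical
  set F : ({i : Fin n // i ∈ α ∩ β} ⊕ ({i : Fin n // i ∈ α \ β} ⊕ {i : Fin n // i ∈ β \ α}))
      → Fin n := Sum.elim Subtype.val (Sum.elim Subtype.val Subtype.val) with hF
  have hFinj : Function.Injective F := by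
    rintro (x | (x | x)) (y | (y | y)) h <;>
      simp only [hF, Sum.elim_inl, Sum.elim_inr] at h
    · exact congrArg Sum.inl (Subtype.ext h)
    · exact absurd ((Finset.mem_inter.mp x.2).2) (h ▸ (Finset.mem_sdiff.mp y.2).2)
    · exact absurd ((Finset.mem_inter.mp x.2).1) (h ▸ (Finset.mem_sdiff.mp y.2).2)
    · exact absurd ((Finset.mem_inter.mp y.2).2) (h ▸ (Finset.mem_sdiff.mp x.2).2)
    · exact congrArg (Sum.inr ∘ Sum.inl) (Subtype.ext h)
    · exact absurd ((Finset.mem_sdiff.mp y.2).1) (h ▸ (Finset.mem_sdiff.mp x.2).2)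
    · exact absurd ((Finset.mem_inter.mp y.2).1) (h ▸ (Finset.mem_sdiff.mp x.2).2)
    · exact absurd ((Finset.mem_sdiff.mp x.2).1) (h ▸ (Finset.mem_sdiff.mp y.2).2)
    · exact congrArg (Sum.inr ∘ Sum.inr) (Subtype.ext h)
  set M := Q.submatrix F F with hM
  have hMpd : M.PosDef := posDef_submatrix hQ hFinj
  have hcore := core M hMpd
  -- identify the four determinants
  let eα : ({i : Fin n // i ∈ α ∩ β} ⊕ {i : Fin n // i ∈ α \ β}) ≃ {i : Fin n // i ∈ α} :=
  { toFun := Sum.elim (fun x => ⟨x.1, (Finset.mem_inter.mp x.2).1⟩)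
      (fun x => ⟨x.1, (Finset.mem_sdiff.mp x.2).1⟩)
    invFun := fun z => if h : z.1 ∈ β then Sum.inl ⟨z.1, Finset.mem_inter.mpr ⟨z.2, h⟩⟩
      else Sum.inr ⟨z.1, Finset.mem_sdiff.mpr ⟨z.2, h⟩⟩
    left_inv := by
      rintro (x | x)
      · simp only [Sum.elim_inl]
        simp [(Finset.mem_inter.mp x.2).2]
      · simp only [Sum.elim_inr]
        simp [(Finset.mem_sdiff.mp x.2).2]
    right_inv := by
      intro z
      dsimp only
      by_cases h : z.1 ∈ β
      · rw [dif_pos h]; rfl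
      · rw [dif_neg h]; rfl }
  let eβ : ({i : Fin n // i ∈ α ∩ β} ⊕ {i : Fin n // i ∈ β \ α}) ≃ {i : Fin n // i ∈ β} :=
  { toFun := Sum.elim (fun x => ⟨x.1, (Finset.mem_inter.mp x.2).2⟩)
      (fun x => ⟨x.1, (Finset.mem_sdiff.mp x.2).1⟩)
    invFun := fun z => if h : z.1 ∈ α then Sum.inl ⟨z.1, Finset.mem_inter.mpr ⟨h, z.2⟩⟩
      else Sum.inr ⟨z.1, Finset.mem_sdiff.mpr ⟨z.2, h⟩⟩
    left_inv := by
      rintro (x | x)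
      · simp only [Sum.elim_inl]
        simp [(Finset.mem_inter.mp x.2).1]
      · simp only [Sum.elim_inr]
        simp [(Finset.mem_sdiff.mp x.2).2]
    right_inv := by
      intro z
      dsimp only
      by_cases h : z.1 ∈ α
      · rw [dif_pos h]; rfl
      · rw [dif_neg h]; rfl }
  let eu : ({i : Fin n // i ∈ α ∩ β} ⊕ ({i : Fin n // i ∈ α \ β} ⊕ {i : Fin n // i ∈ β \ α}))
      ≃ {i : Fin n // i ∈ α ∪ β} :=
  { toFun := Sum.elim (fun x => ⟨x.1, Finset.mem_union_left _ (Finset.mem_inter.mp x.2).1⟩)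
      (Sum.elim (fun x => ⟨x.1, Finset.mem_union_left _ (Finset.mem_sdiff.mp x.2).1⟩)
        (fun x => ⟨x.1, Finset.mem_union_right _ (Finset.mem_sdiff.mp x.2).1⟩))
    invFun := fun z =>
      if hα : z.1 ∈ α then
        (if hβ : z.1 ∈ β then Sum.inl ⟨z.1, Finset.mem_inter.mpr ⟨hα, hβ⟩⟩
          else Sum.inr (Sum.inl ⟨z.1, Finset.mem_sdiff.mpr ⟨hα, hβ⟩⟩))
      else Sum.inr (Sum.inr ⟨z.1, Finset.mem_sdiff.mpr
        ⟨(Finset.mem_union.mp z.2).resolve_left hα, hα⟩⟩)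
    left_inv := by
      rintro (x | (x | x))
      · simp only [Sum.elim_inl]
        simp [(Finset.mem_inter.mp x.2).1, (Finset.mem_inter.mp x.2).2]
      · simp only [Sum.elim_inr, Sum.elim_inl]
        simp [(Finset.mem_sdiff.mp x.2).1, (Finset.mem_sdiff.mp x.2).2]
      · simp only [Sum.elim_inr]
        simp [(Finset.mem_sdiff.mp x.2).2]
    right_inv := by
      intro z
      dsimp only
      by_cases hα : z.1 ∈ α
      · by_cases hβ : z.1 ∈ β
        · rw [dif_pos hα, dif_pos hβ]; rfl
        · rw [dif_pos hα, dif_neg hβ]; rfl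
      · rw [dif_neg hα]; rfl }
  have hu : (Q.submatrix (Subtype.val : {i // i ∈ α ∪ β} → Fin n) Subtype.val).submatrix eu eu
      = M := by
    ext i j
    cases i with
    | inl i => cases j with
      | inl j => rfl
      | inr j => cases j <;> rfl
    | inr i => cases i with
      | inl i => cases j with
        | inl j => rfl
        | inr j => cases j <;> rfl
      | inr i => cases j with
        | inl j => rfl
        | inr j => cases j <;> rfl
  have hα2 : (Q.submatrix (Subtype.val : {i // i ∈ α} → Fin n) Subtype.val).submatrix eα eα
      = M.submatrix (Sum.map id Sum.inl) (Sum.map id Sum.inl) := by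
    ext i j
    cases i <;> cases j <;> rfl
  have hβ2 : (Q.submatrix (Subtype.val : {i // i ∈ β} → Fin n) Subtype.val).submatrix eβ eβ
      = M.submatrix (Sum.map id Sum.inr) (Sum.map id Sum.inr) := by
    ext i j
    cases i <;> cases j <;> rfl
  have hc : M.submatrix Sum.inl Sum.inl
      = Q.submatrix (Subtype.val : {i // i ∈ α ∩ β} → Fin n) Subtype.val := rfl
  rw [← Matrix.det_submatrix_equiv_self eu, hu,
    ← Matrix.det_submatrix_equiv_self eα, hα2,
    ← Matrix.det_submatrix_equiv_self eβ, hβ2, ← hc]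
  exact hcore

lemma smul_one_posDef {n : ℕ} {t : ℝ} (ht : 0 < t) :
    ((t : ℂ) • (1 : Matrix (Fin n) (Fin n) ℂ)).PosDef := by
  have h : (t : ℂ) • (1 : Matrix (Fin n) (Fin n) ℂ) = Matrix.diagonal (fun _ => (t : ℂ)) := by
    ext i j
    by_cases hij : i = j <;>
      simp [Matrix.one_apply, Matrix.diagonal_apply, hij]
  rw [h]
  refine Matrix.posDef_diagonal_iff.mpr fun i => ?_
  exact_mod_cast ht

lemma submatrix_perturb {n : ℕ} (Q : Matrix (Fin n) (Fin n) ℂ) (γ : Finset (Fin n)) (t : ℂ) :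
    ((Q + t • (1 : Matrix (Fin n) (Fin n) ℂ)).submatrix
        (Subtype.val : {i // i ∈ γ} → Fin n) Subtype.val)
      = Q.submatrix Subtype.val Subtype.val
        + t • (1 : Matrix {i // i ∈ γ} {i // i ∈ γ} ℂ) := by
  ext i j
  by_cases hij : i = j
  · subst hij; simp [Matrix.one_apply]
  · have : (i : Fin n) ≠ (j : Fin n) := fun h => hij (Subtype.ext h)
    simp [Matrix.one_apply, this, hij]

lemma det_perturb_continuous {m' : Type*} [Fintype m'] [DecidableEq m']
    (X : Matrix m' m' ℂ) :
    Continuous fun t : ℝ => (X + (t : ℂ) • (1 : Matrix m' m' ℂ)).det := by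
  refine Continuous.matrix_det (continuous_matrix fun i j => ?_)
  simp only [Matrix.add_apply, Matrix.smul_apply]
  exact continuous_const.add (Complex.continuous_ofReal.smul continuous_const)

end Kot

/-- Koteljanskiĭ (Hadamard–Fischer) inequality: for an `n × n` positive semidefinite matrix `Q`
and index sets `α, β ⊆ {1,…,n}`,
`det Q[α ∪ β] · det Q[α ∩ β] ≤ det Q[α] · det Q[β]`. -/
theorem stmt_4 {n : ℕ} (Q : Matrix (Fin n) (Fin n) ℂ) (hQ : Q.PosSemidef)
    (α β : Finset (Fin n)) :
    (Q.submatrix (Subtype.val : {i // i ∈ α ∪ β} → Fin n)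
          (Subtype.val : {i // i ∈ α ∪ β} → Fin n)).det *
        (Q.submatrix (Subtype.val : {i // i ∈ α ∩ β} → Fin n)
          (Subtype.val : {i // i ∈ α ∩ β} → Fin n)).det ≤
      (Q.submatrix (Subtype.val : {i // i ∈ α} → Fin n)
          (Subtype.val : {i // i ∈ α} → Fin n)).det *
        (Q.submatrix (Subtype.val : {i // i ∈ β} → Fin n)
          (Subtype.val : {i // i ∈ β} → Fin n)).det := by
  classical
  set QU := Q.submatrix (Subtype.val : {i // i ∈ α ∪ β} → Fin n) Subtype.val with hQU
  set QC := Q.submatrix (Subtype.val : {i // i ∈ α ∩ β} → Fin n) Subtype.val with hQC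
  set QA := Q.submatrix (Subtype.val : {i // i ∈ α} → Fin n) Subtype.val with hQA
  set QB := Q.submatrix (Subtype.val : {i // i ∈ β} → Fin n) Subtype.val with hQB
  set f : ℝ → ℂ := fun t => (QU + (t : ℂ) • 1).det * (QC + (t : ℂ) • 1).det with hf
  set g : ℝ → ℂ := fun t => (QA + (t : ℂ) • 1).det * (QB + (t : ℂ) • 1).det with hg
  have hfc : Continuous f := (Kot.det_perturb_continuous QU).mul (Kot.det_perturb_continuous QC)
  have hgc : Continuous g := (Kot.det_perturb_continuous QA).mul (Kot.det_perturb_continuous QB)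
  have key : ∀ t ∈ Set.Ioi (0 : ℝ), f t ≤ g t := by
    intro t ht
    have hPD : (Q + (t : ℂ) • 1).PosDef :=
      Matrix.PosDef.posSemidef_add hQ (Kot.smul_one_posDef ht)
    have h := Kot.kot_posDef _ hPD α β
    rw [Kot.submatrix_perturb, Kot.submatrix_perturb, Kot.submatrix_perturb,
      Kot.submatrix_perturb] at h
    exact h
  have hten : Filter.Tendsto f (nhdsWithin 0 (Set.Ioi (0:ℝ))) (nhds (f 0)) :=
    (hfc.tendsto 0).mono_left nhdsWithin_le_nhds
  have hteng : Filter.Tendsto g (nhdsWithin 0 (Set.Ioi (0:ℝ))) (nhds (g 0)) :=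
    (hgc.tendsto 0).mono_left nhdsWithin_le_nhds
  have hev : ∀ᶠ t in nhdsWithin 0 (Set.Ioi (0:ℝ)), f t ≤ g t := by
    filter_upwards [self_mem_nhdsWithin] with t ht using key t ht
  have hle : f 0 ≤ g 0 := le_of_tendsto_of_tendsto hten hteng hev
  simpa [hf, hg] using hle
end

section
/- For every ε > 0 there exists δ > 0 with the following property. Let v : ℕ≥1 → [0,∞) and define V(n) := 1 + 4 · Σ_{ℓ=1}^{n−1} (n+1−ℓ)² v(ℓ) for n ≥ 1. Let A ≥ 1 and assume that for every n ≥ 1, either v(n) ≤ A e^{εn} or v(n) ≤ δ V(n). Then v(n) ≤ A e^{εn} for every n ≥ 1. Moreover, one may take δ = (1 + 4e^{2ε}(1+e^{−ε})/(1−e^{−ε})³)⁻¹. -/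
open Finset

lemma sum_sq_geom_le (x : ℝ) (hx0 : 0 < x) (hx1 : x < 1) (N : ℕ) :
    ∑ k ∈ Finset.range N, (k : ℝ) ^ 2 * x ^ k ≤ x * (1 + x) / (1 - x) ^ 3 := by
  have h1x : 0 < 1 - x := by linarith
  set f : ℕ → ℝ := fun k =>
    x ^ k * ((k : ℝ) ^ 2 / (1 - x) + 2 * k * x / (1 - x) ^ 2 + x * (1 + x) / (1 - x) ^ 3)
    with hf
  have hstep : ∀ k : ℕ, (k : ℝ) ^ 2 * x ^ k = f k - f (k + 1) := by
    intro k
    simp only [hf]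
    push_cast
    field_simp
    ring
  have hsum : ∑ k ∈ Finset.range N, (k : ℝ) ^ 2 * x ^ k = f 0 - f N := by
    rw [Finset.sum_congr rfl fun k _ => hstep k]
    exact Finset.sum_range_sub' f N
  have hfN : 0 ≤ f N := by
    apply mul_nonneg (by positivity)
    have : (0:ℝ) ≤ (N:ℝ) := Nat.cast_nonneg N
    positivity
  have hf0 : f 0 = x * (1 + x) / (1 - x) ^ 3 := by simp [hf]
  linarith

/-- Discrete Gronwall-type lemma: for every `ε > 0` there is `δ > 0` (one may take
`δ = (1 + 4e^{2ε}(1+e^{-ε})/(1-e^{-ε})³)⁻¹`) such that for any nonnegative `v : ℕ≥1 → [0,∞)`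
with `V(n) := 1 + 4 Σ_{ℓ=1}^{n-1} (n+1-ℓ)² v(ℓ)` and any `A ≥ 1`, if for every `n ≥ 1` either
`v(n) ≤ A e^{εn}` or `v(n) ≤ δ V(n)`, then `v(n) ≤ A e^{εn}` for every `n ≥ 1`. -/
theorem stmt_11 (ε : ℝ) (hε : 0 < ε) :
    ∃ δ : ℝ, 0 < δ ∧
      δ = (1 + 4 * Real.exp (2 * ε) * (1 + Real.exp (-ε)) / (1 - Real.exp (-ε)) ^ 3)⁻¹ ∧
      ∀ v : ℕ → ℝ, (∀ n, 1 ≤ n → 0 ≤ v n) →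
        ∀ A : ℝ, 1 ≤ A →
          (∀ n, 1 ≤ n →
            v n ≤ A * Real.exp (ε * n) ∨
              v n ≤ δ * (1 + 4 * ∑ ℓ ∈ Finset.Icc 1 (n - 1), ((n : ℝ) + 1 - (ℓ : ℝ)) ^ 2 * v ℓ)) →
          ∀ n, 1 ≤ n → v n ≤ A * Real.exp (ε * n) := by
  have hx0 : 0 < Real.exp (-ε) := Real.exp_pos _
  have hx1 : Real.exp (-ε) < 1 := by
    rw [Real.exp_lt_one_iff]; linarith
  set x := Real.exp (-ε) with hxdef
  have h1x : 0 < 1 - x := by linarith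
  set D : ℝ := 1 + 4 * Real.exp (2 * ε) * (1 + x) / (1 - x) ^ 3 with hD
  have hD1 : 1 ≤ D := by
    have h2 : (0:ℝ) < Real.exp (2 * ε) := Real.exp_pos _
    have h3 : 0 ≤ 4 * Real.exp (2 * ε) * (1 + x) / (1 - x) ^ 3 := by positivity
    exact hD ▸ le_add_of_nonneg_right h3
  have hD0 : 0 < D := by linarith
  refine ⟨D⁻¹, by positivity, rfl, ?_⟩
  intro v hv A hA H n
  induction n using Nat.strong_induction_on with
  | _ n IH =>
  intro hn
  rcases H n hn with h | h
  · exact h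
  · -- bound the sum
    set S := ∑ ℓ ∈ Finset.Icc 1 (n - 1), ((n : ℝ) + 1 - (ℓ : ℝ)) ^ 2 * v ℓ with hS
    have hεn : 0 ≤ ε * n := by positivity
    have hexp1 : 1 ≤ Real.exp (ε * n) := Real.one_le_exp hεn
    have hAe : 1 ≤ A * Real.exp (ε * n) := le_trans hA (le_mul_of_one_le_right (by linarith) hexp1)
    -- Step A: S ≤ sum with A e^{εℓ}
    have stepA : S ≤ ∑ ℓ ∈ Finset.Icc 1 (n - 1),
        ((n : ℝ) + 1 - (ℓ : ℝ)) ^ 2 * (A * Real.exp (ε * ℓ)) := by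
      apply Finset.sum_le_sum
      intro ℓ hℓ
      rw [Finset.mem_Icc] at hℓ
      have hℓn : ℓ < n := by omega
      exact mul_le_mul_of_nonneg_left (IH ℓ hℓn hℓ.1) (by positivity)
    -- Step B: rewrite each term
    have stepB : ∑ ℓ ∈ Finset.Icc 1 (n - 1), ((n : ℝ) + 1 - (ℓ : ℝ)) ^ 2 * (A * Real.exp (ε * ℓ))
        = A * Real.exp (ε * (n + 1)) *
          ∑ ℓ ∈ Finset.Icc 1 (n - 1), ((n + 1 - ℓ : ℕ) : ℝ) ^ 2 * x ^ (n + 1 - ℓ) := by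
      rw [Finset.mul_sum]
      apply Finset.sum_congr rfl
      intro ℓ hℓ
      rw [Finset.mem_Icc] at hℓ
      have hℓn : ℓ ≤ n + 1 := by omega
      have hcast : ((n + 1 - ℓ : ℕ) : ℝ) = (n : ℝ) + 1 - (ℓ : ℝ) := by
        push_cast [Nat.cast_sub hℓn]; ring
      rw [hcast, hxdef, ← Real.exp_nat_mul, hcast]
      have hexp : Real.exp (ε * (↑n + 1)) * Real.exp (((n:ℝ) + 1 - (ℓ:ℝ)) * -ε) = Real.exp (ε * ℓ) := by
        rw [← Real.exp_add]; ring_nf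
      rw [← hexp]; ring
    -- Step C: the geometric-type sum is ≤ c
    have stepC : ∑ ℓ ∈ Finset.Icc 1 (n - 1), ((n + 1 - ℓ : ℕ) : ℝ) ^ 2 * x ^ (n + 1 - ℓ)
        ≤ x * (1 + x) / (1 - x) ^ 3 := by
      have himg : ∑ ℓ ∈ Finset.Icc 1 (n - 1), ((n + 1 - ℓ : ℕ) : ℝ) ^ 2 * x ^ (n + 1 - ℓ)
          = ∑ k ∈ (Finset.Icc 1 (n - 1)).image (fun ℓ => n + 1 - ℓ), ((k : ℝ)) ^ 2 * x ^ k := by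
        rw [Finset.sum_image]
        intro a ha b hb hab
        simp only [Finset.mem_coe, Finset.mem_Icc] at ha hb hab
        omega
      rw [himg]
      calc ∑ k ∈ (Finset.Icc 1 (n - 1)).image (fun ℓ => n + 1 - ℓ), ((k : ℝ)) ^ 2 * x ^ k
          ≤ ∑ k ∈ Finset.range (n + 2), ((k : ℝ)) ^ 2 * x ^ k := by
            apply Finset.sum_le_sum_of_subset_of_nonneg
            · intro k hk
              rw [Finset.mem_image] at hk
              obtain ⟨ℓ, hℓ, rfl⟩ := hk
              rw [Finset.mem_range]
              omega
            · intro k _ _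
              positivity
        _ ≤ x * (1 + x) / (1 - x) ^ 3 := sum_sq_geom_le x hx0 hx1 (n + 2)
    -- combine
    have hSbound : S ≤ A * Real.exp (ε * (n + 1)) * (x * (1 + x) / (1 - x) ^ 3) := by
      have hpos : 0 ≤ A * Real.exp (ε * (n + 1)) := by positivity
      calc S ≤ _ := stepA
        _ = _ := stepB
        _ ≤ _ := mul_le_mul_of_nonneg_left stepC hpos
    -- final arithmetic
    have hkey : Real.exp (ε * (n + 1)) * x = Real.exp (ε * n) := by
      rw [hxdef, ← Real.exp_add]
      ring_nf
    have h2ε : 1 ≤ Real.exp (2 * ε) := Real.one_le_exp (by linarith)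
    have hmain : 1 + 4 * S ≤ D * (A * Real.exp (ε * n)) := by
      have e1 : A * Real.exp (ε * (n + 1)) * (x * (1 + x) / (1 - x) ^ 3)
          = A * Real.exp (ε * n) * ((1 + x) / (1 - x) ^ 3) := by
        rw [← hkey]; ring
      have e2 : A * Real.exp (ε * n) * ((1 + x) / (1 - x) ^ 3)
          ≤ A * Real.exp (ε * n) * (Real.exp (2 * ε) * ((1 + x) / (1 - x) ^ 3)) := by
        apply mul_le_mul_of_nonneg_left _ (by positivity)
        nlinarith [div_nonneg (by linarith : (0:ℝ) ≤ 1 + x) (by positivity : (0:ℝ) ≤ (1-x)^3)]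
      have hDexp : D * (A * Real.exp (ε * n))
          = A * Real.exp (ε * n) + 4 * (A * Real.exp (ε * n) * (Real.exp (2 * ε) * ((1 + x) / (1 - x) ^ 3))) := by
        rw [hD]; ring
      rw [hDexp]
      have := hSbound
      rw [e1] at this
      linarith
    calc v n ≤ D⁻¹ * (1 + 4 * S) := h
      _ ≤ D⁻¹ * (D * (A * Real.exp (ε * n))) := by
          apply mul_le_mul_of_nonneg_left hmain (by positivity)
      _ = A * Real.exp (ε * n) := by
          rw [← mul_assoc, inv_mul_cancel₀ (ne_of_gt hD0), one_mul]
end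

section
/- Let Γ be the free group on a finite set S, let F ⊆ Γ be a grounded set (a finite subset containing the identity that is connected in the left Cayley graph of (Γ, S)), let g be an element of the exterior boundary of F with g ∈ sF for s ∈ S ∪ S⁻¹ (so F ∪ {g} is the enlargement of F in direction s). If h, a, b ∈ F satisfy a⁻¹b = h⁻¹g, then h ∈ F ∩ sF. -/
/-- `s` is one of the free generators or an inverse of one: `s ∈ S ∪ S⁻¹`. -/
def IsFreeGenerator {α : Type*} (s : FreeGroup α) : Prop :=
  ∃ a : α, s = FreeGroup.of a ∨ s = (FreeGroup.of a)⁻¹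

/-- A finite subset of the free group containing the identity and connected in the left Cayley
graph (edges `{x, tx}` for `t ∈ S ∪ S⁻¹`). -/
def Grounded {α : Type*} (F : Set (FreeGroup α)) : Prop :=
  F.Finite ∧ (1 : FreeGroup α) ∈ F ∧
    ∀ g ∈ F,
      Relation.ReflTransGen
        (fun x y => y ∈ F ∧ ∃ a : α, y = FreeGroup.of a * x ∨ y = (FreeGroup.of a)⁻¹ * x) 1 g

section Aux
open FreeGroup List

variable {α : Type*}

/-- The no-cancellation condition for adjacent letters. -/
def GoodPair (p q : α × Bool) : Prop := ¬ (p.1 = q.1 ∧ p.2 = !q.2)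

lemma reduce_eq_self_of_chain' [DecidableEq α] :
    ∀ {L : List (α × Bool)}, List.Chain' GoodPair L → FreeGroup.reduce L = L := by
  intro L
  induction L with
  | nil => intro _; rfl
  | cons x L ih =>
    intro hc
    rw [FreeGroup.reduce.cons, ih hc.tail]
    cases L with
    | nil => rfl
    | cons y t =>
      have hxy : GoodPair x y := List.isChain_cons_cons.mp hc |>.1
      simp only [GoodPair] at hxy
      simp [hxy]

lemma chain'_of_reduce_eq_self [DecidableEq α] :
    ∀ {L : List (α × Bool)}, FreeGroup.reduce L = L → List.Chain' GoodPair L := by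
  intro L
  induction L with
  | nil => intro _; exact List.isChain_nil
  | cons x L ih =>
    intro hr
    rw [FreeGroup.reduce.cons] at hr
    rcases hL : FreeGroup.reduce L with _ | ⟨hd, tl⟩
    · rw [hL] at hr
      simp at hr
      subst hr
      exact List.isChain_singleton _
    · rw [hL] at hr
      by_cases hcond : x.1 = hd.1 ∧ x.2 = !hd.2
      · simp only [hcond, if_pos, and_self] at hr
        exfalso
        have h1 : (x :: L).length ≤ tl.length := by rw [hr]
        have h2 : (hd :: tl).length ≤ L.length :=
          hL ▸ FreeGroup.Red.length_le (FreeGroup.reduce.red)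
        simp at h1 h2; omega
      · simp only [if_neg hcond] at hr
        have hL' : L = hd :: tl := by
          have := congrArg List.tail hr
          simpa using this.symm
        subst hL'
        exact List.isChain_cons_cons.mpr ⟨hcond, ih hL⟩

lemma mk_singleton_inv [DecidableEq α] (p : α × Bool) :
    (FreeGroup.mk [p])⁻¹ = FreeGroup.mk [(p.1, !p.2)] := by
  rw [FreeGroup.inv_mk]; simp [FreeGroup.invRev]

lemma crossing [DecidableEq α] (c x : FreeGroup α) (σ t : α × Bool)
    (hx : (c * x⁻¹).toWord.head? = some σ)
    (hy : (c * (FreeGroup.mk [t] * x)⁻¹).toWord.head? ≠ some σ) :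
    FreeGroup.mk [t] * x = c ∧ x = (FreeGroup.mk [σ])⁻¹ * c := by
  set u := c * x⁻¹ with hu
  obtain ⟨w, hw⟩ : ∃ w, u.toWord = σ :: w := by
    rcases hL : u.toWord with _ | ⟨y, w⟩
    · rw [hL] at hx; simp at hx
    · rw [hL] at hx; simp at hx; exact ⟨w, by rw [hx]⟩
  set t' : α × Bool := (t.1, !t.2) with ht'
  have humk : u = FreeGroup.mk (σ :: w) := by rw [← hw, FreeGroup.mk_toWord]
  have hval : c * (FreeGroup.mk [t] * x)⁻¹ = FreeGroup.mk ((σ :: w) ++ [t']) := by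
    rw [mul_inv_rev, ← mul_assoc, ← hu, humk, mk_singleton_inv, ← ht', FreeGroup.mul_mk]
  have hchain : List.Chain' GoodPair (σ :: w) :=
    chain'_of_reduce_eq_self (by rw [← hw]; exact FreeGroup.reduce_toWord u)
  rcases w.eq_nil_or_concat with rfl | ⟨w₀, l, rfl⟩
  · by_cases hc : σ.1 = t'.1 ∧ σ.2 = !t'.2
    · have ht'2 : t' = (σ.1, !σ.2) := by
        ext
        · exact hc.1.symm
        · rw [hc.2]; simp
      have hone : c * (FreeGroup.mk [t] * x)⁻¹ = 1 := by
        rw [hval, ht'2, show (σ :: []) ++ [(σ.1, !σ.2)] = [σ] ++ [(σ.1, !σ.2)] from rfl,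
          ← FreeGroup.mul_mk, ← mk_singleton_inv, mul_inv_cancel]
      constructor
      · have := mul_eq_one_iff_eq_inv.mp hone
        rw [inv_inv] at this; exact this.symm
      · have h2 : c * x⁻¹ = FreeGroup.mk [σ] := humk
        rw [← h2]; group
    · exfalso; apply hy
      rw [hval, FreeGroup.toWord_mk, List.singleton_append,
        reduce_eq_self_of_chain' (List.isChain_cons_cons.mpr ⟨hc, List.isChain_singleton _⟩)]
      rfl
  · exfalso; apply hy
    rw [List.concat_eq_append] at hw humk hval hchain
    by_cases hc : l.1 = t'.1 ∧ l.2 = !t'.2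
    · have ht'2 : t' = (l.1, !l.2) := by
        ext
        · exact hc.1.symm
        · rw [hc.2]; simp
      have hcollapse : FreeGroup.mk ((σ :: (w₀ ++ [l])) ++ [t']) = FreeGroup.mk (σ :: w₀) := by
        rw [ht'2, show (σ :: (w₀ ++ [l])) ++ [(l.1, !l.2)]
            = (σ :: w₀) ++ ([l] ++ [(l.1, !l.2)]) from by simp,
          ← FreeGroup.mul_mk, ← FreeGroup.mul_mk, ← mk_singleton_inv, mul_inv_cancel, mul_one]
      rw [hval, hcollapse, FreeGroup.toWord_mk,
        reduce_eq_self_of_chain' (hchain.prefix ⟨[l], by simp⟩)]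
      rfl
    · have hchain2 : List.Chain' GoodPair ((σ :: (w₀ ++ [l])) ++ [t']) := by
        show List.IsChain GoodPair ((σ :: (w₀ ++ [l])) ++ [t']); rw [List.isChain_append]
        refine ⟨hchain, List.isChain_singleton _, ?_⟩
        intro p hp q hq
        simp at hq
        have hp' : p = l := by
          have hgl : (σ :: (w₀ ++ [l])).getLast? = some l := by
            rw [show σ :: (w₀ ++ [l]) = (σ :: w₀) ++ [l] from by simp]
            exact List.getLast?_concat
          rw [hgl] at hp
          exact (by simpa using hp : l = p).symm
        rw [hp', ← hq]; exact hc
      rw [hval, FreeGroup.toWord_mk, reduce_eq_self_of_chain' hchain2]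
      rfl

lemma exists_cross_step {β : Type*} {R : β → β → Prop} {P : β → Prop} {u v : β}
    (h : Relation.ReflTransGen R u v) (hu : P u) (hv : ¬ P v) :
    ∃ x y, R x y ∧ P x ∧ ¬ P y := by
  induction h with
  | refl => exact absurd hu hv
  | @tail m w hR hstep ih =>
    by_cases hm : P m
    · exact ⟨m, w, hstep, hm, hv⟩
    · exact ih hm

lemma key_lemma [DecidableEq α] {F : Set (FreeGroup α)} (c : FreeGroup α) (σ : α × Bool)
    {u v : FreeGroup α}
    (hch : Relation.ReflTransGen
      (fun x y => x ∈ F ∧ y ∈ F ∧ ∃ t : α × Bool, y = FreeGroup.mk [t] * x) u v)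
    (hu : (c * u⁻¹).toWord.head? = some σ)
    (hv : (c * v⁻¹).toWord.head? ≠ some σ) :
    c ∈ F ∧ (FreeGroup.mk [σ])⁻¹ * c ∈ F := by
  obtain ⟨x, y, ⟨hxF, hyF, t, rfl⟩, hPx, hPy⟩ :=
    exists_cross_step (P := fun z => (c * z⁻¹).toWord.head? = some σ) hch hu hv
  obtain ⟨h1, h2⟩ := crossing c x σ t hPx hPy
  exact ⟨h1 ▸ hyF, h2 ▸ hxF⟩

lemma R'_symm [DecidableEq α] {F : Set (FreeGroup α)} :
    Symmetric (fun x y : FreeGroup α =>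
      x ∈ F ∧ y ∈ F ∧ ∃ t : α × Bool, y = FreeGroup.mk [t] * x) := by
  rintro x y ⟨hx, hy, t, rfl⟩
  refine ⟨hy, hx, (t.1, !t.2), ?_⟩
  rw [← mk_singleton_inv, ← mul_assoc, inv_mul_cancel, one_mul]

lemma grounded_chain [DecidableEq α] {F : Set (FreeGroup α)} (h1F : (1 : FreeGroup α) ∈ F)
    {x : FreeGroup α}
    (hch : Relation.ReflTransGen
      (fun x y => y ∈ F ∧ ∃ a : α, y = FreeGroup.of a * x ∨ y = (FreeGroup.of a)⁻¹ * x) 1 x) :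
    Relation.ReflTransGen
      (fun x y : FreeGroup α =>
        x ∈ F ∧ y ∈ F ∧ ∃ t : α × Bool, y = FreeGroup.mk [t] * x) 1 x := by
  induction hch with
  | refl => exact Relation.ReflTransGen.refl
  | @tail m w hR hstep ih =>
    have hmF : m ∈ F := by
      rcases Relation.ReflTransGen.cases_tail hR with h | ⟨d, _, hd⟩
      · rw [h]; exact h1F
      · exact hd.1
    refine ih.tail ⟨hmF, hstep.1, ?_⟩
    obtain ⟨a, h | h⟩ := hstep.2
    · exact ⟨(a, true), h⟩
    · refine ⟨(a, false), ?_⟩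
      rw [h, show FreeGroup.of a = FreeGroup.mk [(a, true)] from rfl, mk_singleton_inv]
      norm_num

end Aux

/-- If `F` is grounded, `g` is an exterior boundary point of `F` with `g ∈ sF`
(so `F ∪ {g}` is the enlargement of `F` in direction `s`), and `h, a, b ∈ F` satisfy
`a⁻¹ b = h⁻¹ g`, then `h ∈ F ∩ sF`. -/
theorem stmt_13 {α : Type*} [Fintype α] (F : Set (FreeGroup α)) (hF : Grounded F)
    (s g : FreeGroup α) (hs : IsFreeGenerator s) (hgF : g ∉ F) (hgs : s⁻¹ * g ∈ F)
    (h a b : FreeGroup α) (hh : h ∈ F) (ha : a ∈ F) (hb : b ∈ F)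
    (heq : a⁻¹ * b = h⁻¹ * g) :
    h ∈ F ∩ (fun x => s * x) '' F := by

  classical
  obtain ⟨σ, hsσ⟩ : ∃ σ : α × Bool, s = FreeGroup.mk [σ] := by
    obtain ⟨c, hc | hc⟩ := hs
    · exact ⟨(c, true), hc⟩
    · refine ⟨(c, false), ?_⟩
      rw [hc, show FreeGroup.of c = FreeGroup.mk [(c, true)] from rfl, mk_singleton_inv]
      norm_num
  obtain ⟨-, h1F, hconn⟩ := hF
  have hch1 : ∀ x ∈ F, Relation.ReflTransGen
      (fun x y : FreeGroup α =>
        x ∈ F ∧ y ∈ F ∧ ∃ t : α × Bool, y = FreeGroup.mk [t] * x) 1 x :=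
    fun x hx => grounded_chain h1F (hconn x hx)
  have hPf : (g * (s⁻¹ * g)⁻¹).toWord.head? = some σ := by
    rw [show g * (s⁻¹ * g)⁻¹ = s from by group, hsσ, FreeGroup.toWord_mk,
      FreeGroup.reduce_singleton]
    rfl
  have hP1 : (g * (1 : FreeGroup α)⁻¹).toWord.head? = some σ := by
    by_contra hn
    obtain ⟨hmem, -⟩ :=
      key_lemma g σ (@Std.Symm.symm _ _ (@Relation.ReflTransGen.stdSymm _ _ ⟨fun _ _ h => R'_symm h⟩) _ _ (hch1 _ hgs)) hPf hn
    exact hgF hmem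
  have hPall : ∀ x ∈ F, (g * x⁻¹).toWord.head? = some σ := by
    intro x hx
    by_contra hn
    obtain ⟨hmem, -⟩ := key_lemma g σ (hch1 x hx) hP1 hn
    exact hgF hmem
  have hQa : (h * a⁻¹).toWord.head? = some σ := by
    have hba : h * (a⁻¹ * b) = g := by rw [heq]; group
    rw [show h * a⁻¹ = h * (a⁻¹ * b) * b⁻¹ from by group, hba]
    exact hPall b hb
  have hQh : (h * h⁻¹).toWord.head? ≠ some σ := by
    rw [mul_inv_cancel, FreeGroup.toWord_one]
    simp
  have hchah := (@Std.Symm.symm _ _ (@Relation.ReflTransGen.stdSymm _ _ ⟨fun _ _ h => R'_symm h⟩) _ _ (hch1 a ha)).trans (hch1 h hh)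
  obtain ⟨-, hsh⟩ := key_lemma h σ hchah hQa hQh
  refine ⟨hh, ⟨s⁻¹ * h, by rw [hsσ]; exact hsh, by group⟩⟩
end

section
/- Let Γ be the free group on a finite set S and let F ⊆ Γ be a grounded set. Let F' = F ∪ {g} be an enlargement of F in direction s ∈ S ∪ S⁻¹. Then: F' ∩ sF' = (F ∩ sF) ∪ {g}; F' ∩ s⁻¹F' = (F ∩ s⁻¹F) ∪ {s⁻¹g}; and F' ∩ tF' = F ∩ tF for every t ∈ (S ∪ S⁻¹) \ {s, s⁻¹}. -/
lemma step_lemma {α : Type*} [DecidableEq α] (a : α) (b : Bool) (u : FreeGroup α) (hu : u ≠ 1)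
    (h2 : FreeGroup.mk [(a,b)] * u ≠ 1) :
    (FreeGroup.toWord (FreeGroup.mk [(a,b)] * u)).getLast? = u.toWord.getLast? := by
  have h : FreeGroup.mk [(a,b)] * u = FreeGroup.mk ((a,b) :: u.toWord) := by
    conv_lhs => rw [← FreeGroup.mk_toWord (x := u)]
    rw [FreeGroup.mul_mk]; rfl
  rw [h, FreeGroup.toWord_mk, FreeGroup.reduce.cons, FreeGroup.reduce_toWord]
  rcases hw : u.toWord with _ | ⟨⟨c, d⟩, tl⟩
  · exact absurd (FreeGroup.toWord_eq_nil_iff.mp hw) hu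
  · by_cases hc : a = c ∧ b = !d
    · simp only [hc, and_self, if_true]
      rcases tl with _ | ⟨e, tl⟩
      · exfalso; apply h2
        rw [h, ← FreeGroup.toWord_eq_nil_iff, FreeGroup.toWord_mk, FreeGroup.reduce.cons,
          FreeGroup.reduce_toWord, hw]
        simp [hc]
      · simp
    · simp only [hc, if_false]
      simp

lemma inv_single {α : Type*} (a : α) (b : Bool) :
    ((FreeGroup.mk [(a,b)])⁻¹ : FreeGroup α) = FreeGroup.mk [(a,!b)] := by
  rw [FreeGroup.inv_mk]; simp [FreeGroup.invRev]

lemma toWord_single {α : Type*} [DecidableEq α] (a : α) (b : Bool) :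
    (FreeGroup.mk [(a,b)] : FreeGroup α).toWord = [(a,b)] := by
  rw [FreeGroup.toWord_mk, FreeGroup.reduce_singleton]

lemma single_ne_one {α : Type*} (a : α) (b : Bool) :
    (FreeGroup.mk [(a,b)] : FreeGroup α) ≠ 1 := by
  classical
  intro h
  have := congrArg FreeGroup.toWord h
  rw [toWord_single, FreeGroup.toWord_one] at this
  exact List.cons_ne_nil _ _ this

/-- Along a path from 1 inside `F`, with `g ∉ F`, the last letter of `x * g⁻¹` is constant. -/
lemma invariant {α : Type*} [DecidableEq α] (F : Set (FreeGroup α)) (g : FreeGroup α)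
    (hgF : g ∉ F) (h1 : (1 : FreeGroup α) ∈ F) {v : FreeGroup α}
    (hv : Relation.ReflTransGen
      (fun x y => y ∈ F ∧ ∃ a : α, y = FreeGroup.of a * x ∨ y = (FreeGroup.of a)⁻¹ * x) 1 v) :
    v ∈ F ∧ (FreeGroup.toWord (v * g⁻¹)).getLast? = (FreeGroup.toWord g⁻¹).getLast? := by
  induction hv with
  | refl => exact ⟨h1, by rw [one_mul]⟩
  | tail hbc hR ih =>
    rename_i b c
    obtain ⟨hcF, a, hca⟩ := hR
    refine ⟨hcF, ?_⟩
    have hbg : b * g⁻¹ ≠ 1 := by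
      intro h
      exact hgF (mul_inv_eq_one.mp h ▸ ih.1)
    have hcg : c * g⁻¹ ≠ 1 := by
      intro h
      exact hgF (by rwa [mul_inv_eq_one.mp h] at hcF)
    rcases hca with h | h
    · have : c * g⁻¹ = FreeGroup.mk [(a, true)] * (b * g⁻¹) := by
        rw [h]; show _ = FreeGroup.of a * (b * g⁻¹); rw [mul_assoc]
      rw [this, step_lemma a true _ hbg (this ▸ hcg), ih.2]
    · have : c * g⁻¹ = FreeGroup.mk [(a, false)] * (b * g⁻¹) := by
        rw [h]; rw [show ((FreeGroup.of a)⁻¹ : FreeGroup α) = FreeGroup.mk [(a, false)] from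
          inv_single a true, mul_assoc]
      rw [this, step_lemma a false _ hbg (this ▸ hcg), ih.2]

/-- If `g ∉ F` and `F` is grounded, any two neighbors of `g` in `F` coincide (tree property). -/
lemma neighbor_unique {α : Type*} [DecidableEq α] (F : Set (FreeGroup α)) (hF : Grounded F)
    (g : FreeGroup α) (hgF : g ∉ F) (a c : α) (b d : Bool)
    (h1 : FreeGroup.mk [(a,b)] * g ∈ F) (h2 : FreeGroup.mk [(c,d)] * g ∈ F) :
    a = c ∧ b = d := by
  obtain ⟨-, hone, hconn⟩ := hF
  have key : ∀ (x : α) (y : Bool), FreeGroup.mk [(x,y)] * g ∈ F →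
      (some (x,y) : Option (α × Bool)) = (FreeGroup.toWord g⁻¹).getLast? := by
    intro x y hxy
    have := (invariant F g hgF hone (hconn _ hxy)).2
    rwa [mul_assoc, mul_inv_cancel, mul_one, toWord_single] at this
  have := (key a b h1).trans (key c d h2).symm
  simpa using this

/-- For a grounded set `F` and an enlargement `F' = F ∪ {g}` in direction `s`:
`F' ∩ sF' = (F ∩ sF) ∪ {g}`, `F' ∩ s⁻¹F' = (F ∩ s⁻¹F) ∪ {s⁻¹g}`, and
`F' ∩ tF' = F ∩ tF` for `t ∈ (S ∪ S⁻¹) \ {s, s⁻¹}`. -/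
theorem stmt_14 {α : Type*} [Fintype α] (F : Set (FreeGroup α)) (hF : Grounded F)
    (s g : FreeGroup α) (hs : IsFreeGenerator s) (hgF : g ∉ F) (hgs : s⁻¹ * g ∈ F) :
    ((F ∪ {g}) ∩ (fun x => s * x) '' (F ∪ {g}) = (F ∩ (fun x => s * x) '' F) ∪ {g}) ∧
      ((F ∪ {g}) ∩ (fun x => s⁻¹ * x) '' (F ∪ {g}) =
        (F ∩ (fun x => s⁻¹ * x) '' F) ∪ {s⁻¹ * g}) ∧
      ∀ t : FreeGroup α, IsFreeGenerator t → t ≠ s → t ≠ s⁻¹ →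
        (F ∪ {g}) ∩ (fun x => t * x) '' (F ∪ {g}) = F ∩ (fun x => t * x) '' F := by
  classical
  -- write s as a single letter
  obtain ⟨a, hsa⟩ := hs
  obtain ⟨b, hsb, hsib⟩ : ∃ b : Bool, s = FreeGroup.mk [(a, b)] ∧ s⁻¹ = FreeGroup.mk [(a, !b)] := by
    rcases hsa with h | h
    · exact ⟨true, h, by rw [h]; exact inv_single a true⟩
    · refine ⟨false, ?_, ?_⟩
      · rw [h]; exact inv_single a true
      · rw [h, inv_inv]; rfl
  have hs1 : s ≠ 1 := hsb ▸ single_ne_one a b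
  -- neighbors of g in F are unique: they all equal s⁻¹ * g
  have huniq : ∀ (c : α) (d : Bool), FreeGroup.mk [(c,d)] * g ∈ F → c = a ∧ d = !b := by
    intro c d h
    have := neighbor_unique F hF g hgF c a d (!b) h (by rwa [← hsib])
    exact this
  have hsg : s * g ∉ F := by
    rw [hsb]
    intro h
    have := (huniq a b h).2
    simp at this
  refine ⟨?_, ?_, ?_⟩
  · ext x
    simp only [Set.mem_inter_iff, Set.mem_union, Set.mem_image, Set.mem_singleton_iff]
    constructor
    · rintro ⟨hx, y, hy | hy, rfl⟩
      · rcases hx with hx | hx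
        · exact Or.inl ⟨hx, y, hy, rfl⟩
        · exact Or.inr hx
      · subst hy
        rcases hx with hx | hx
        · exact absurd hx hsg
        · exact absurd (right_eq_mul.mp hx.symm) hs1
    · rintro (⟨hx, y, hy, rfl⟩ | hxg)
      · exact ⟨Or.inl hx, y, Or.inl hy, rfl⟩
      · exact ⟨Or.inr hxg, s⁻¹ * g, Or.inl hgs, by rw [hxg]; simp⟩
  · ext x
    simp only [Set.mem_inter_iff, Set.mem_union, Set.mem_image, Set.mem_singleton_iff]
    constructor
    · rintro ⟨hx, y, hy | hy, rfl⟩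
      · rcases hx with hx | hx
        · exact Or.inl ⟨hx, y, hy, rfl⟩
        · exfalso
          apply hsg
          have : y = s * g := by rw [← hx]; group
          rwa [← this]
      · subst hy
        exact Or.inr rfl
    · rintro (⟨hx, y, hy, rfl⟩ | hxg)
      · exact ⟨Or.inl hx, y, Or.inl hy, rfl⟩
      · exact ⟨Or.inl (hxg ▸ hgs), g, Or.inr rfl, hxg.symm⟩
  · intro t ht hts htsi
    obtain ⟨c, htc⟩ := ht
    obtain ⟨d, htd, htid⟩ : ∃ d : Bool, t = FreeGroup.mk [(c, d)] ∧ t⁻¹ = FreeGroup.mk [(c, !d)] := by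
      rcases htc with h | h
      · exact ⟨true, h, by rw [h]; exact inv_single c true⟩
      · refine ⟨false, ?_, ?_⟩
        · rw [h]; exact inv_single c true
        · rw [h, inv_inv]; rfl
    have ht1 : t ≠ 1 := htd ▸ single_ne_one c d
    have htg : t * g ∉ F := by
      rw [htd]
      intro h
      obtain ⟨h1, h2⟩ := huniq c d h
      apply htsi
      rw [htd, hsib, h1, h2]
    have htig : t⁻¹ * g ∉ F := by
      rw [htid]
      intro h
      obtain ⟨h1, h2⟩ := huniq c (!d) h
      apply hts
      rw [htd, hsb, h1]
      have : d = b := by rw [← Bool.not_not d, h2, Bool.not_not]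
      rw [this]
    ext x
    simp only [Set.mem_inter_iff, Set.mem_union, Set.mem_image, Set.mem_singleton_iff]
    constructor
    · rintro ⟨hx, y, hy | hy, rfl⟩
      · rcases hx with hx | hx
        · exact ⟨hx, y, hy, rfl⟩
        · exfalso
          apply htig
          have : y = t⁻¹ * g := by rw [← hx]; group
          rwa [← this]
      · subst hy
        rcases hx with hx | hx
        · exact absurd hx htg
        · exact absurd (right_eq_mul.mp hx.symm) ht1
    · rintro ⟨hx, y, hy, rfl⟩
      exact ⟨Or.inl hx, y, Or.inl hy, rfl⟩
end

section
/- Let Γ be the free group of finite rank r ≥ 1 with free generating set S, |S| = r, and let B_n be the closed ball of radius n about the identity in the word metric. Then for every n ≥ 1, |B_n| − Σ_{s ∈ S} |B_n ∩ sB_n| = 1. -/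
open FreeGroup

section aux

variable {α : Type*} [DecidableEq α]

private lemma red_tail {x : α × Bool} {L : List (α × Bool)}
    (h : reduce (x :: L) = x :: L) : reduce L = L := by
  rw [FreeGroup.reduce.cons] at h
  cases hL : reduce L with
  | nil =>
    rw [hL] at h
    have h' : [x] = x :: L := h
    have hL0 : L = [] := by
      simpa using (congrArg List.length h').symm
    rw [hL0]
  | cons hd tl =>
    rw [hL] at h
    simp only [List.casesOn] at h
    split_ifs at h with hc
    · have h1 := congrArg List.length h
      have hle : (reduce L).length ≤ L.length :=
        FreeGroup.Red.length_le (FreeGroup.reduce.red)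
      rw [hL] at hle
      simp at h1 hle
      omega
    · have h2 : hd :: tl = L := (List.cons.inj h).2
      exact h2

private lemma red_cons {x : α × Bool} {L : List (α × Bool)}
    (h : reduce L = L) (hhead : ∀ y, L.head? = some y → ¬(x.1 = y.1 ∧ x.2 = !y.2)) :
    reduce (x :: L) = x :: L := by
  rw [FreeGroup.reduce.cons, h]
  cases L with
  | nil => rfl
  | cons hd tl =>
    simp only [List.casesOn]
    rw [if_neg (hhead hd rfl)]

private lemma norm_mk_red {L : List (α × Bool)} (h : reduce L = L) :
    FreeGroup.norm (mk L) = L.length := by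
  show (mk L).toWord.length = _
  rw [FreeGroup.toWord_mk, h]

private lemma toWord_red {g : FreeGroup α} : reduce g.toWord = g.toWord :=
  FreeGroup.reduce_toWord g

private lemma head_ne {a : α} {b : Bool} {L : List (α × Bool)}
    (hred : reduce ((a, b) :: L) = (a, b) :: L) : L.head? ≠ some (a, !b) := by
  cases L with
  | nil => simp
  | cons y M =>
    intro hy
    have hy' : y = (a, !b) := by simpa using hy
    subst hy'
    have htail := red_tail hred
    rw [FreeGroup.reduce.cons, htail] at hred
    simp only [List.casesOn] at hred
    rw [if_pos (by simp)] at hred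
    have := congrArg List.length hred
    simp at this
    omega

/-- Case (A): stripping a leading positive letter. -/
private lemma strip_pos {g : FreeGroup α} {a : α} {L : List (α × Bool)}
    (h : g.toWord = (a, true) :: L) : ((of a)⁻¹ * g).toWord = L := by
  have hg : g = mk ((a, true) :: L) := by rw [← h, FreeGroup.mk_toWord]
  have hred : reduce ((a, true) :: L) = (a, true) :: L := by rw [← h]; exact toWord_red
  rw [hg]
  show (mk (invRev [(a, true)]) * mk ((a, true) :: L)).toWord = L
  rw [FreeGroup.mul_mk]
  have : invRev [(a, true)] ++ (a, true) :: L = (a, false) :: (a, true) :: L := rfl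
  rw [this, FreeGroup.toWord_mk, FreeGroup.reduce.cons, hred]
  simp

/-- Case (B): cancelling a leading negative letter. -/
private lemma strip_neg {g : FreeGroup α} {a : α} {L : List (α × Bool)}
    (h : g.toWord = (a, false) :: L) : (of a * g).toWord = L := by
  have hg : g = mk ((a, false) :: L) := by rw [← h, FreeGroup.mk_toWord]
  have hred : reduce ((a, false) :: L) = (a, false) :: L := by rw [← h]; exact toWord_red
  rw [hg]
  show (mk [(a, true)] * mk ((a, false) :: L)).toWord = L
  rw [FreeGroup.mul_mk]
  have : [(a, true)] ++ (a, false) :: L = (a, true) :: (a, false) :: L := rfl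
  rw [this, FreeGroup.toWord_mk, FreeGroup.reduce.cons, hred]
  simp

/-- Case (C): prepending a negative letter when the word does not start with `(a, true)`. -/
private lemma prepend_neg {h : FreeGroup α} {a : α}
    (hh : h.toWord.head? ≠ some (a, true)) :
    ((of a)⁻¹ * h).toWord = (a, false) :: h.toWord := by
  conv_lhs => rw [← FreeGroup.mk_toWord (x := h)]
  show (mk (invRev [(a, true)]) * mk h.toWord).toWord = _
  rw [FreeGroup.mul_mk]
  have : invRev [(a, true)] ++ h.toWord = (a, false) :: h.toWord := rfl
  rw [this, FreeGroup.toWord_mk]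
  refine red_cons toWord_red ?_
  rintro ⟨y1, y2⟩ hy ⟨h1, h2⟩
  simp only at h1 h2
  apply hh
  rw [hy]
  cases y2
  · simp at h2
  · simp [← h1]

variable (n : ℕ)

/-- The forward map of the bijection. -/
private def Fmap (p : (a : α) × {h : FreeGroup α //
    FreeGroup.norm h ≤ n ∧ FreeGroup.norm ((of a)⁻¹ * h) ≤ n}) : FreeGroup α :=
  if p.2.1.toWord.head? = some (p.1, true) then p.2.1 else (of p.1)⁻¹ * p.2.1

private lemma Fmap_spec (p : (a : α) × {h : FreeGroup α //
    FreeGroup.norm h ≤ n ∧ FreeGroup.norm ((of a)⁻¹ * h) ≤ n}) :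
    FreeGroup.norm (Fmap n p) ≤ n ∧
      ((Fmap n p).toWord.head? = some (p.1, true) ∧ Fmap n p = p.2.1 ∨
        (Fmap n p).toWord.head? = some (p.1, false) ∧ (p.2.1 : FreeGroup α) = of p.1 * Fmap n p) := by
  obtain ⟨a, h, hh1, hh2⟩ := p
  unfold Fmap
  dsimp only
  split_ifs with hc
  · exact ⟨hh1, Or.inl ⟨hc, rfl⟩⟩
  · have hw := prepend_neg (h := h) (a := a) hc
    refine ⟨hh2, Or.inr ⟨?_, ?_⟩⟩
    · rw [hw]; rfl
    · group

private lemma Fmap_ne_one (p : (a : α) × {h : FreeGroup α //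
    FreeGroup.norm h ≤ n ∧ FreeGroup.norm ((of a)⁻¹ * h) ≤ n}) : Fmap n p ≠ 1 := by
  intro h1
  rcases (Fmap_spec n p).2 with ⟨hh, _⟩ | ⟨hh, _⟩ <;>
    rw [h1, FreeGroup.toWord_one] at hh <;> simp at hh

private lemma Fmap_injective : Function.Injective (Fmap (α := α) n) := by
  rintro ⟨a, h, hh⟩ ⟨b, k, hk⟩ hpq
  have hp := Fmap_spec n ⟨a, ⟨h, hh⟩⟩
  have hq := Fmap_spec n ⟨b, ⟨k, hk⟩⟩
  rw [hpq] at hp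
  rcases hp.2 with ⟨hp1, hp2⟩ | ⟨hp1, hp2⟩ <;> rcases hq.2 with ⟨hq1, hq2⟩ | ⟨hq1, hq2⟩ <;>
    have hab := Option.some.inj (hp1.symm.trans hq1)
  · injection hab with ha hb
    subst ha
    have hhk : h = k := hp2.symm.trans hq2
    subst hhk
    rfl
  · injection hab with ha hb
    simp at hb
  · injection hab with ha hb
    simp at hb
  · injection hab with ha hb
    subst ha
    have hhk : h = k := hp2.trans hq2.symm
    subst hhk
    rfl

private lemma Fmap_surjective (g : FreeGroup α) (hg1 : FreeGroup.norm g ≤ n) (hg2 : g ≠ 1) :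
    ∃ p, Fmap n p = g := by
  have hne : g.toWord ≠ [] := fun h => hg2 (FreeGroup.toWord_eq_nil_iff.mp h)
  obtain ⟨⟨a, b⟩, L, hL⟩ : ∃ x L, g.toWord = x :: L := by
    cases h : g.toWord with
    | nil => exact absurd h hne
    | cons x L => exact ⟨x, L, rfl⟩
  have hnormg : FreeGroup.norm g = L.length + 1 := by
    show g.toWord.length = _
    rw [hL]; simp
  cases b
  · -- first letter negative: g = a⁻¹ ⋯ ; take h = of a * g
    have hw := strip_neg hL
    have hnorm : FreeGroup.norm (of a * g) = L.length := by
      show (of a * g).toWord.length = _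
      rw [hw]
    refine ⟨⟨a, of a * g, ?_, ?_⟩, ?_⟩
    · rw [hnorm]; omega
    · have : (of a)⁻¹ * (of a * g) = g := by group
      rw [this]; exact hg1
    · unfold Fmap
      dsimp only
      rw [if_neg ?_]
      · group
      · rw [hw]
        have hred : reduce ((a, false) :: L) = (a, false) :: L := by
          rw [← hL]; exact toWord_red
        simpa using head_ne hred
  · -- first letter positive: take h = g
    have hw := strip_pos hL
    have hnorm : FreeGroup.norm ((of a)⁻¹ * g) = L.length := by
      show ((of a)⁻¹ * g).toWord.length = _
      rw [hw]
    refine ⟨⟨a, g, hg1, ?_⟩, ?_⟩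
    · rw [hnorm]; omega
    · unfold Fmap
      dsimp only
      rw [if_pos (by rw [hL]; rfl)]

end aux

private lemma nat_card_sigma {ι : Type*} [Fintype ι] {f : ι → Type*} [∀ i, Finite (f i)] :
    Nat.card ((i : ι) × f i) = ∑ i, Nat.card (f i) := by
  letI := fun i => Fintype.ofFinite (f i)
  simp [Nat.card_eq_fintype_card, Fintype.card_sigma]

/-- For the free group of finite rank `r ≥ 1` with free generating set `S` and balls `B_n` in the
word metric: `|B_n| - Σ_{s ∈ S} |B_n ∩ s B_n| = 1` for every `n ≥ 1`. -/
theorem stmt_15 {α : Type*} [Fintype α] [DecidableEq α] [Nonempty α] (n : ℕ) (hn : 1 ≤ n) :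
    (Nat.card {g : FreeGroup α | FreeGroup.norm g ≤ n} : ℤ) -
        ∑ a : α,
          (Nat.card ↥({g : FreeGroup α | FreeGroup.norm g ≤ n} ∩
            (fun g => FreeGroup.of a * g) '' {g : FreeGroup α | FreeGroup.norm g ≤ n}) : ℤ) =
      1 := by
  classical
  set T : Set (FreeGroup α) := {g : FreeGroup α | FreeGroup.norm g ≤ n} with hT
  -- T is finite
  have hTfin : T.Finite := by
    apply Set.Finite.of_finite_image (f := FreeGroup.toWord)
      ?_ FreeGroup.toWord_injective.injOn
    apply (List.finite_length_le (α := α × Bool) n).subset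
    rintro _ ⟨g, hg, rfl⟩
    exact hg
  -- rewrite each intersection set
  have hset : ∀ a : α, T ∩ (fun g => FreeGroup.of a * g) '' T =
      {h : FreeGroup α | FreeGroup.norm h ≤ n ∧ FreeGroup.norm ((FreeGroup.of a)⁻¹ * h) ≤ n} := by
    intro a
    ext h
    simp only [Set.mem_inter_iff, Set.mem_setOf_eq, Set.mem_image, hT]
    constructor
    · rintro ⟨h1, g, hg, rfl⟩
      refine ⟨h1, ?_⟩
      have : (FreeGroup.of a)⁻¹ * (FreeGroup.of a * g) = g := by group
      rw [this]; exact hg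
    · rintro ⟨h1, h2⟩
      exact ⟨h1, (FreeGroup.of a)⁻¹ * h, h2, by group⟩
  -- the bijection
  have hfin2 : ∀ a : α, Finite {h : FreeGroup α //
      FreeGroup.norm h ≤ n ∧ FreeGroup.norm ((FreeGroup.of a)⁻¹ * h) ≤ n} := by
    intro a
    have : {h : FreeGroup α | FreeGroup.norm h ≤ n ∧
        FreeGroup.norm ((FreeGroup.of a)⁻¹ * h) ≤ n}.Finite :=
      hTfin.subset (fun x hx => hx.1)
    exact this.to_subtype
  have hfin3 : Finite {g : FreeGroup α // FreeGroup.norm g ≤ n ∧ g ≠ 1} :=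
    (hTfin.subset (fun x hx => hx.1) : ({g : FreeGroup α | FreeGroup.norm g ≤ n ∧ g ≠ 1}).Finite).to_subtype
  have hbij : Function.Bijective (fun p : (a : α) × {h : FreeGroup α //
      FreeGroup.norm h ≤ n ∧ FreeGroup.norm ((FreeGroup.of a)⁻¹ * h) ≤ n} =>
      (⟨Fmap n p, (Fmap_spec n p).1, Fmap_ne_one n p⟩ :
        {g : FreeGroup α // FreeGroup.norm g ≤ n ∧ g ≠ 1})) := by
    constructor
    · intro p q hpq
      exact Fmap_injective n (congrArg Subtype.val hpq)
    · rintro ⟨g, hg1, hg2⟩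
      obtain ⟨p, hp⟩ := Fmap_surjective n g hg1 hg2
      exact ⟨p, Subtype.ext hp⟩
  haveI := hfin2
  haveI := hfin3
  have hcard : Nat.card ((a : α) × {h : FreeGroup α //
      FreeGroup.norm h ≤ n ∧ FreeGroup.norm ((FreeGroup.of a)⁻¹ * h) ≤ n}) =
      Nat.card {g : FreeGroup α // FreeGroup.norm g ≤ n ∧ g ≠ 1} :=
    Nat.card_eq_of_bijective _ hbij
  rw [nat_card_sigma] at hcard
  -- |T| = |T \ {1}| + 1
  have h1T : (1 : FreeGroup α) ∈ T := by
    simp [hT, FreeGroup.norm_one]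
  have hsplit : Nat.card T = Nat.card {g : FreeGroup α // FreeGroup.norm g ≤ n ∧ g ≠ 1} + 1 := by
    haveI := hTfin.fintype
    have : T = insert 1 {g : FreeGroup α | FreeGroup.norm g ≤ n ∧ g ≠ 1} := by
      ext g
      by_cases hg : g = 1 <;> simp [hT, hg, FreeGroup.norm_one]
    rw [this]
    have hfin' : ({g : FreeGroup α | FreeGroup.norm g ≤ n ∧ g ≠ 1}).Finite :=
      hTfin.subset (fun x hx => hx.1)
    rw [Nat.card_coe_set_eq, Set.ncard_insert_of_notMem (by simp) hfin',
      ← Nat.card_coe_set_eq]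
    rfl
  have hsum : ∀ a : α, (Nat.card ↥(T ∩ (fun g => FreeGroup.of a * g) '' T)) =
      Nat.card {h : FreeGroup α //
        FreeGroup.norm h ≤ n ∧ FreeGroup.norm ((FreeGroup.of a)⁻¹ * h) ≤ n} := by
    intro a
    rw [hset a]
    rfl
  calc (Nat.card T : ℤ) - ∑ a : α, (Nat.card ↥(T ∩ (fun g => FreeGroup.of a * g) '' T) : ℤ)
      = (Nat.card T : ℤ) - ∑ a : α, (Nat.card {h : FreeGroup α //
          FreeGroup.norm h ≤ n ∧ FreeGroup.norm ((FreeGroup.of a)⁻¹ * h) ≤ n} : ℤ) := by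
        simp_rw [hsum]
    _ = 1 := by
        have h2 : (∑ a : α, (Nat.card {h : FreeGroup α //
            FreeGroup.norm h ≤ n ∧ FreeGroup.norm ((FreeGroup.of a)⁻¹ * h) ≤ n} : ℤ)) =
            (Nat.card {g : FreeGroup α // FreeGroup.norm g ≤ n ∧ g ≠ 1} : ℤ) := by
          exact_mod_cast congrArg (Nat.cast : ℕ → ℤ) hcard
        rw [hsplit, h2]
        push_cast
        ring
end

section
/- Let Γ be the free group on a finite set S, and for g ∈ Γ let |g| be its reduced word length. Let a, b : Γ → ℂ be finitely supported functions with a supported on the sphere S_n = {|g| = n} and b supported on S_m. Then for any k with |n−m| ≤ k ≤ n+m and k ≡ n+m (mod 2), the restriction of the convolution a*b to S_k satisfies ‖(a*b)·1_{S_k}‖_{ℓ²} ≤ ‖a‖_{ℓ²}·‖b‖_{ℓ²}; and for every other k, (a*b)·1_{S_k} = 0. -/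
open scoped BigOperators

/-- Convolution of two (finitely supported) functions on the free group:
`(a * b)(g) = Σ_h a(h) b(h⁻¹ g)`. -/
noncomputable def convol {α : Type*} (a b : FreeGroup α → ℂ) : FreeGroup α → ℂ :=
  fun g => ∑ᶠ h : FreeGroup α, a h * b (h⁻¹ * g)

/-- The `ℓ²` norm of the restriction of `a` to the set `T`. -/
noncomputable def l2normOn {α : Type*} (a : FreeGroup α → ℂ) (T : Set (FreeGroup α)) : ℝ :=
  Real.sqrt (∑ᶠ g ∈ T, ‖a g‖ ^ 2)

set_option linter.unusedSectionVars false

namespace HaagerupAux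
open FreeGroup List

variable {α : Type*} [DecidableEq α]

def Rel : (α × Bool) → (α × Bool) → Prop := fun p q => ¬(p.1 = q.1 ∧ p.2 = !q.2)

lemma reduce_eq_self_of_chain : ∀ {L : List (α × Bool)}, List.Chain' Rel L →
    FreeGroup.reduce L = L := by
  intro L h
  induction L with
  | nil => rfl
  | cons x t ih =>
    have ht : FreeGroup.reduce t = t := ih h.tail
    rw [FreeGroup.reduce.cons, ht]
    cases t with
    | nil => rfl
    | cons hd tl =>
      have hr : Rel x hd := (List.isChain_cons_cons.mp h).1
      simp only [Rel] at hr
      simp [hr]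

lemma chain_of_reduce_eq_self : ∀ {L : List (α × Bool)}, FreeGroup.reduce L = L →
    List.Chain' Rel L := by
  intro L h
  induction L with
  | nil => exact List.IsChain.nil
  | cons x t ih =>
    rw [FreeGroup.reduce.cons] at h
    rcases ht : FreeGroup.reduce t with - | ⟨hd, tl⟩
    · rw [ht] at h
      simp only at h
      have : t = [] := by
        have h' : [x] = x :: t := h
        injection h' with _ h2
        exact h2.symm
      subst this
      simp [Chain']
    · rw [ht] at h
      simp only at h
      by_cases hc : x.1 = hd.1 ∧ x.2 = !hd.2
      · rw [if_pos hc] at h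
        exfalso
        have h1 : (FreeGroup.reduce t).length ≤ t.length := FreeGroup.Red.length_le FreeGroup.reduce.red
        have h2 := congrArg List.length h
        rw [ht] at h1
        simp at h2
        simp at h1
        omega
      · rw [if_neg hc] at h
        have h2 : t = hd :: tl := by
          injection h with _ h2
          exact h2.symm
        rw [h2]
        refine List.isChain_cons_cons.mpr ⟨hc, ?_⟩
        rw [← h2]
        exact ih (by rw [ht, h2])

lemma invRev_cons (x : α × Bool) (u : List (α × Bool)) :
    FreeGroup.invRev (x :: u) = FreeGroup.invRev u ++ [(x.1, !x.2)] := by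
  simp [FreeGroup.invRev]

lemma reduce_tail {x : α × Bool} {t : List (α × Bool)} (h : FreeGroup.reduce (x :: t) = x :: t) :
    FreeGroup.reduce t = t :=
  reduce_eq_self_of_chain (chain_of_reduce_eq_self h).tail

lemma cancel_core : ∀ (u v : List (α × Bool)), FreeGroup.reduce u = u → FreeGroup.reduce v = v →
    ∃ c, c ≤ u.length ∧ c ≤ v.length ∧ u.take c = v.take c ∧
      FreeGroup.reduce (FreeGroup.invRev u ++ v) = FreeGroup.invRev (u.drop c) ++ v.drop c := by
  intro u
  induction u with
  | nil =>
    intro v _ hv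
    exact ⟨0, by simp [FreeGroup.invRev_empty, hv]⟩
  | cons x u ih =>
    intro v hu hv
    rcases v with - | ⟨y, v⟩
    · refine ⟨0, by simp, by simp, by simp, ?_⟩
      simp only [List.append_nil, List.drop_zero]
      rw [FreeGroup.reduce_invRev, hu]
    · by_cases hxy : x = y
      · subst hxy
        obtain ⟨c, hcu, hcv, htake, hred⟩ := ih v (reduce_tail hu) (reduce_tail hv)
        refine ⟨c + 1, by simpa using hcu, by simpa using hcv, by simp [htake], ?_⟩
        have hstep : FreeGroup.Red.Step
            (FreeGroup.invRev u ++ (x.1, !x.2) :: (x.1, !(!x.2)) :: v)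
            (FreeGroup.invRev u ++ v) := FreeGroup.Red.Step.not
        have harr : FreeGroup.invRev (x :: u) ++ x :: v
            = FreeGroup.invRev u ++ (x.1, !x.2) :: (x.1, !(!x.2)) :: v := by
          rw [invRev_cons, List.append_assoc]
          simp
        rw [harr, FreeGroup.reduce.Step.eq hstep, hred]
        simp
      · refine ⟨0, by simp, by simp, by simp, ?_⟩
        simp only [List.drop_zero]
        apply reduce_eq_self_of_chain
        refine List.isChain_append.mpr ⟨?_, ?_, ?_⟩
        · exact chain_of_reduce_eq_self (by rw [FreeGroup.reduce_invRev, hu])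
        · exact chain_of_reduce_eq_self hv
        · intro p hp q hq
          rw [invRev_cons, List.getLast?_concat] at hp
          simp only [Option.mem_def, Option.some.injEq] at hp
          simp only [List.head?_cons, Option.mem_def, Option.some.injEq] at hq
          subst hp; subst hq
          simp only [Rel, Bool.not_not, not_and]
          intro h1 h2
          exact hxy (Prod.ext h1 (Bool.not_inj h2))

lemma norm_def (x : FreeGroup α) : FreeGroup.norm x = x.toWord.length := rfl

lemma key (h g : FreeGroup α) :
    ∃ c, c ≤ FreeGroup.norm h ∧ c ≤ FreeGroup.norm g ∧
      FreeGroup.norm (h⁻¹ * g) + 2 * c = FreeGroup.norm h + FreeGroup.norm g ∧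
      (h.toWord).take c = (g.toWord).take c ∧
      (h⁻¹ * g).toWord = FreeGroup.invRev (h.toWord.drop c) ++ g.toWord.drop c := by
  obtain ⟨c, hcu, hcv, htake, hred⟩ :=
    cancel_core h.toWord g.toWord h.reduce_toWord g.reduce_toWord
  have h1 : h⁻¹ * g = FreeGroup.mk (FreeGroup.invRev h.toWord ++ g.toWord) := by
    rw [← FreeGroup.mul_mk, ← FreeGroup.inv_mk, FreeGroup.mk_toWord, FreeGroup.mk_toWord]
  have h2 : (h⁻¹ * g).toWord = FreeGroup.invRev (h.toWord.drop c) ++ g.toWord.drop c := by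
    rw [h1, FreeGroup.toWord_mk, hred]
  refine ⟨c, hcu, hcv, ?_, htake, h2⟩
  rw [norm_def, norm_def, norm_def, h2]
  simp only [List.length_append, FreeGroup.invRev_length, List.length_drop]
  omega


end HaagerupAux

/-- Haagerup's convolution inequality on free groups: if `a` is supported on the sphere `S_n`
and `b` on `S_m`, then `‖(a*b)·1_{S_k}‖₂ ≤ ‖a‖₂ ‖b‖₂` whenever `|n-m| ≤ k ≤ n+m` and
`k ≡ n+m (mod 2)`, and `(a*b)·1_{S_k} = 0` for every other `k`. -/
theorem stmt_16 {α : Type*} [Fintype α] [DecidableEq α] (n m : ℕ)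
    (a b : FreeGroup α → ℂ)
    (ha : ∀ g, a g ≠ 0 → FreeGroup.norm g = n)
    (hb : ∀ g, b g ≠ 0 → FreeGroup.norm g = m) :
    (∀ k : ℕ, n ≤ m + k → m ≤ n + k → k ≤ n + m → (n + m) % 2 = k % 2 →
        l2normOn (convol a b) {g | FreeGroup.norm g = k} ≤
          l2normOn a Set.univ * l2normOn b Set.univ) ∧
      ∀ k : ℕ, ¬(n ≤ m + k ∧ m ≤ n + k ∧ k ≤ n + m ∧ (n + m) % 2 = k % 2) →
        ∀ g : FreeGroup α, FreeGroup.norm g = k → convol a b g = 0 := by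
  classical
  have key2 : ∀ (k : ℕ), ¬(n ≤ m + k ∧ m ≤ n + k ∧ k ≤ n + m ∧ (n + m) % 2 = k % 2) →
      ∀ g : FreeGroup α, FreeGroup.norm g = k → convol a b g = 0 := by
    intro k hk g hg
    simp only [convol]
    apply finsum_eq_zero_of_forall_eq_zero
    intro h
    by_contra hne
    have ha' : a h ≠ 0 := fun h0 => hne (by simp [h0])
    have hb' : b (h⁻¹ * g) ≠ 0 := fun h0 => hne (by simp [h0])
    have hn := ha h ha'
    have hm := hb _ hb'
    obtain ⟨c, hc1, hc2, hc3, -, -⟩ := HaagerupAux.key h g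
    rw [hn] at hc1 hc3
    rw [hg] at hc2 hc3
    rw [hm] at hc3
    exact hk ⟨by omega, by omega, by omega, by omega⟩
  refine ⟨?_, key2⟩
  intro k hk1 hk2 hk3 hk4
  set c := (n + k - m) / 2 with hc
  set j := (n + m - k) / 2 with hj
  have fin_s : ∀ i : ℕ, {g : FreeGroup α | FreeGroup.norm g = i}.Finite := by
    intro i
    have he : {g : FreeGroup α | FreeGroup.norm g = i}
        = FreeGroup.toWord ⁻¹' {l | l.length = i} := rfl
    rw [he]
    exact (List.finite_length_eq _ i).preimage FreeGroup.toWord_injective.injOn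
  set Fn := (fin_s n).toFinset with hFn
  set Fm := (fin_s m).toFinset with hFm
  set Fk := (fin_s k).toFinset with hFk
  have conv_eq : ∀ g : FreeGroup α, convol a b g = ∑ h ∈ Fn, a h * b (h⁻¹ * g) := by
    intro g
    simp only [convol]
    apply finsum_eq_sum_of_support_subset
    intro h hh
    simp only [Function.mem_support] at hh
    have h0 : a h ≠ 0 := fun h0 => hh (by simp [h0])
    rw [hFn, Set.Finite.coe_toFinset]
    exact ha h h0
  have norm_a : l2normOn a Set.univ = Real.sqrt (∑ h ∈ Fn, ‖a h‖ ^ 2) := by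
    rw [l2normOn, finsum_mem_univ]
    congr 1
    apply finsum_eq_sum_of_support_subset
    intro h hh
    simp only [Function.mem_support] at hh
    have h0 : a h ≠ 0 := by intro h0; apply hh; simp [h0]
    rw [hFn, Set.Finite.coe_toFinset]
    exact ha h h0
  have norm_b : l2normOn b Set.univ = Real.sqrt (∑ w ∈ Fm, ‖b w‖ ^ 2) := by
    rw [l2normOn, finsum_mem_univ]
    congr 1
    apply finsum_eq_sum_of_support_subset
    intro w hw
    simp only [Function.mem_support] at hw
    have h0 : b w ≠ 0 := by intro h0; apply hw; simp [h0]
    rw [hFm, Set.Finite.coe_toFinset]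
    exact hb w h0
  have lhs_eq : l2normOn (convol a b) {g | FreeGroup.norm g = k}
      = Real.sqrt (∑ g ∈ Fk, ‖convol a b g‖ ^ 2) := by
    rw [l2normOn]
    congr 1
    rw [← (fin_s k).coe_toFinset, finsum_mem_coe_finset]
  set P : FreeGroup α → FreeGroup α := fun g => FreeGroup.mk (g.toWord.take c) with hP
  set Q : FreeGroup α → FreeGroup α := fun g => FreeGroup.mk (g.toWord.drop c) with hQ
  set A : FreeGroup α → ℝ := fun p => ∑ h ∈ Fn, if P h = p then ‖a h‖ ^ 2 else 0 with hA
  set B : FreeGroup α → ℝ :=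
    fun r => ∑ w ∈ Fm, if FreeGroup.mk (w.toWord.drop j) = r then ‖b w‖ ^ 2 else 0 with hB
  have hA0 : ∀ p, 0 ≤ A p := by
    intro p; rw [hA]
    exact Finset.sum_nonneg fun h _ => by split <;> positivity
  have hB0 : ∀ r, 0 ≤ B r := by
    intro r; rw [hB]
    exact Finset.sum_nonneg fun h _ => by split <;> positivity
  have hPQ : ∀ g : FreeGroup α, P g * Q g = g := by
    intro g
    rw [hP, hQ]
    simp only
    rw [FreeGroup.mul_mk, List.take_append_drop, FreeGroup.mk_toWord]
  have per_g : ∀ g ∈ Fk, ‖convol a b g‖ ^ 2 ≤ A (P g) * B (Q g) := by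
    intro g hgk
    have hgk' : FreeGroup.norm g = k := by
      rw [hFk, Set.Finite.mem_toFinset] at hgk; exact hgk
    have hterm : ∀ h ∈ Fn, a h * b (h⁻¹ * g)
        = (if P h = P g then a h else 0) *
          (if FreeGroup.mk ((h⁻¹ * g).toWord.drop j) = Q g then b (h⁻¹ * g) else 0) := by
      intro h hh
      by_cases h0 : a h = 0
      · simp [h0]
      by_cases h1 : b (h⁻¹ * g) = 0
      · simp [h1]
      have hn' := ha h h0
      have hm' := hb _ h1
      obtain ⟨c', d1, d2, d3, d4, d5⟩ := HaagerupAux.key h g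
      rw [hn'] at d1 d3
      rw [hgk'] at d2 d3
      rw [hm'] at d3
      have hcc : c' = c := by omega
      rw [hcc] at d4 d5
      rw [if_pos, if_pos]
      · have hlen : (FreeGroup.invRev (h.toWord.drop c)).length = j := by
          rw [FreeGroup.invRev_length, List.length_drop]
          have hln : h.toWord.length = n := hn'
          omega
        rw [d5, ← hlen, List.drop_left, hQ]
      · rw [hP]; simp only [d4]
    have step1 : ‖convol a b g‖ ≤ ∑ h ∈ Fn,
        ‖if P h = P g then a h else 0‖ *
        ‖if FreeGroup.mk ((h⁻¹ * g).toWord.drop j) = Q g then b (h⁻¹ * g) else 0‖ := by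
      rw [conv_eq g, Finset.sum_congr rfl hterm]
      refine (norm_sum_le _ _).trans (le_of_eq ?_)
      apply Finset.sum_congr rfl
      intro h _
      rw [norm_mul]
    have step2 := Finset.sum_mul_sq_le_sq_mul_sq Fn
      (fun h => ‖if P h = P g then a h else 0‖)
      (fun h => ‖if FreeGroup.mk ((h⁻¹ * g).toWord.drop j) = Q g then b (h⁻¹ * g) else 0‖)
    have step3 : ‖convol a b g‖ ^ 2 ≤
        (∑ h ∈ Fn, ‖if P h = P g then a h else 0‖ ^ 2) *
        (∑ h ∈ Fn, ‖if FreeGroup.mk ((h⁻¹ * g).toWord.drop j) = Q g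
          then b (h⁻¹ * g) else 0‖ ^ 2) :=
      le_trans (pow_le_pow_left₀ (norm_nonneg _) step1 2) step2
    have e1 : (∑ h ∈ Fn, ‖if P h = P g then a h else 0‖ ^ 2) = A (P g) := by
      rw [hA]
      apply Finset.sum_congr rfl
      intro h _
      split <;> simp
    have e2 : (∑ h ∈ Fn, ‖if FreeGroup.mk ((h⁻¹ * g).toWord.drop j) = Q g
        then b (h⁻¹ * g) else 0‖ ^ 2) ≤ B (Q g) := by
      set t : FreeGroup α → ℝ :=
        fun w => if FreeGroup.mk (w.toWord.drop j) = Q g then ‖b w‖ ^ 2 else 0 with hT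
      have et : ∀ h ∈ Fn, ‖if FreeGroup.mk ((h⁻¹ * g).toWord.drop j) = Q g
          then b (h⁻¹ * g) else 0‖ ^ 2 = t (h⁻¹ * g) := by
        intro h _
        rw [hT]
        simp only
        split <;> simp
      rw [Finset.sum_congr rfl et]
      have ht0 : ∀ w, 0 ≤ t w := by
        intro w; simp only [hT]; split <;> positivity
      have inj : ∀ x ∈ Fn, ∀ y ∈ Fn, x⁻¹ * g = y⁻¹ * g → x = y := by
        intro x _ y _ e
        have := mul_right_cancel e
        exact inv_injective this
      have him : ∑ x ∈ Fn.image (fun h => h⁻¹ * g), t x = ∑ x ∈ Fn, t (x⁻¹ * g) :=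
        Finset.sum_image (f := t) (g := fun h => h⁻¹ * g) inj
      rw [← him]
      have hfil : ∀ x ∈ Fn.image (fun h => h⁻¹ * g), t x ≠ 0 → x ∈ Fm := by
        intro x _ hx
        rw [hT] at hx
        have hbx : b x ≠ 0 := by
          intro h0
          apply hx
          simp [h0]
        rw [hFm, Set.Finite.mem_toFinset]
        exact hb x hbx
      rw [← Finset.sum_filter_of_ne hfil, hB]
      apply Finset.sum_le_sum_of_subset_of_nonneg
      · intro x hx; exact (Finset.mem_filter.mp hx).2
      · intro i _ _
        exact ht0 i
    calc ‖convol a b g‖ ^ 2 ≤ A (P g) * (∑ h ∈ Fn,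
          ‖if FreeGroup.mk ((h⁻¹ * g).toWord.drop j) = Q g then b (h⁻¹ * g) else 0‖ ^ 2) := by
          rw [← e1]; exact step3
      _ ≤ A (P g) * B (Q g) := mul_le_mul_of_nonneg_left e2 (hA0 _)
  have boundA : ∀ S : Finset (FreeGroup α), (∑ p ∈ S, A p) ≤ ∑ h ∈ Fn, ‖a h‖ ^ 2 := by
    intro S
    rw [hA]
    rw [Finset.sum_comm]
    apply Finset.sum_le_sum
    intro h _
    rw [Finset.sum_ite_eq S (P h) (fun _ => ‖a h‖ ^ 2)]
    split
    · exact le_rfl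
    · positivity
  have boundB : ∀ S : Finset (FreeGroup α), (∑ r ∈ S, B r) ≤ ∑ w ∈ Fm, ‖b w‖ ^ 2 := by
    intro S
    rw [hB]
    rw [Finset.sum_comm]
    apply Finset.sum_le_sum
    intro w _
    rw [Finset.sum_ite_eq S (FreeGroup.mk (w.toWord.drop j)) (fun _ => ‖b w‖ ^ 2)]
    split
    · exact le_rfl
    · positivity
  have sum_bound : (∑ g ∈ Fk, ‖convol a b g‖ ^ 2)
      ≤ (∑ h ∈ Fn, ‖a h‖ ^ 2) * (∑ w ∈ Fm, ‖b w‖ ^ 2) := by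
    have inj2 : ∀ x ∈ Fk, ∀ y ∈ Fk, (P x, Q x) = (P y, Q y) → x = y := by
      intro x _ y _ e
      rw [Prod.mk.injEq] at e
      rw [← hPQ x, ← hPQ y, e.1, e.2]
    calc (∑ g ∈ Fk, ‖convol a b g‖ ^ 2) ≤ ∑ g ∈ Fk, A (P g) * B (Q g) :=
          Finset.sum_le_sum per_g
      _ = ∑ x ∈ Fk.image (fun g => (P g, Q g)), A x.1 * B x.2 :=
          (Finset.sum_image (f := fun x : FreeGroup α × FreeGroup α => A x.1 * B x.2)
            (g := fun g => (P g, Q g)) inj2).symm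
      _ ≤ ∑ x ∈ (Fk.image P) ×ˢ (Fk.image Q), A x.1 * B x.2 := by
          apply Finset.sum_le_sum_of_subset_of_nonneg
          · intro x hx
            obtain ⟨g, hg, rfl⟩ := Finset.mem_image.mp hx
            exact Finset.mem_product.mpr
              ⟨Finset.mem_image_of_mem _ hg, Finset.mem_image_of_mem _ hg⟩
          · intro i _ _
            exact mul_nonneg (hA0 _) (hB0 _)
      _ = (∑ p ∈ Fk.image P, A p) * (∑ r ∈ Fk.image Q, B r) := by
          rw [Finset.sum_product, ← Finset.sum_mul_sum]
      _ ≤ (∑ h ∈ Fn, ‖a h‖ ^ 2) * (∑ w ∈ Fm, ‖b w‖ ^ 2) :=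
          mul_le_mul (boundA _) (boundB _)
            (Finset.sum_nonneg fun r _ => hB0 r)
            (Finset.sum_nonneg fun h _ => by positivity)
  rw [lhs_eq, norm_a, norm_b,
    ← Real.sqrt_mul (Finset.sum_nonneg fun h _ => by positivity)]
  exact Real.sqrt_le_sqrt sum_bound
end
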